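/- arXiv:1303.1026 — 13 statements merged into one kernel-verified Lean document; each statement's English description precedes it below -/
import Mathlib

section
/- Let n and q be integers with n ≥ 2 and q ≥ 2, and let F be an alphabet of size q. Then every non-overlapping code C ⊆ F^n satisfies (2n−1)·|C| < q^n; equivalently, C(n,q) < q^n/(2n−1). -/
/-- Two words `u` and `v` of length `n` over alphabet `F` are overlapping if some
non-empty proper prefix of one equals a non-empty proper suffix of the other. -/
def Overlapping {F : Type*} {n : ℕ} (u v : Fin n → F) : Prop :=
  ∃ m : ℕ, ∃ _h1 : 0 < m, ∃ h2 : m < n,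
    ((∀ i : ℕ, ∀ hi : i < m, u ⟨i, hi.trans h2⟩ = v ⟨n - m + i, by omega⟩) ∨
     (∀ i : ℕ, ∀ hi : i < m, v ⟨i, hi.trans h2⟩ = u ⟨n - m + i, by omega⟩))

/-- A code `C ⊆ F^n` is non-overlapping if every two (not necessarily distinct)
codewords are non-overlapping. -/
def NonOverlappingCode {F : Type*} {n : ℕ} (C : Set (Fin n → F)) : Prop :=
  ∀ u ∈ C, ∀ v ∈ C, ¬ Overlapping u v

/-- `maxNOCode n q` is `C(n,q)`, the maximum cardinality of a non-overlapping
`q`-ary code of length `n`. -/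
noncomputable def maxNOCode (n q : ℕ) : ℕ :=
  sSup {m | ∃ C : Set (Fin n → Fin q), NonOverlappingCode C ∧ C.ncard = m}

namespace BlackburnAux

def dd {N : ℕ} (s t : Fin N) : ℕ :=
  if s.val ≤ t.val then t.val - s.val else t.val + N - s.val

lemma dd_lt {N : ℕ} (s t : Fin N) : dd s t < N := by
  have h1 := s.isLt; have h2 := t.isLt
  unfold dd; split <;> omega

lemma dd_pos_of_ne {N : ℕ} {s t : Fin N} (h : s ≠ t) : 0 < dd s t := by
  have h1 := s.isLt; have h2 := t.isLt
  have h3 : s.val ≠ t.val := fun he => h (Fin.ext he)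
  unfold dd; split <;> omega

lemma dd_add_dd {N : ℕ} {s t : Fin N} (h : s ≠ t) : dd s t + dd t s = N := by
  have h1 := s.isLt; have h2 := t.isLt
  have h3 : s.val ≠ t.val := fun he => h (Fin.ext he)
  unfold dd; split <;> split <;> omega

def pos {N : ℕ} (s : Fin N) (i : ℕ) (hi : i < N) : Fin N :=
  ⟨if s.val + i < N then s.val + i else s.val + i - N, by
    have := s.isLt; split <;> omega⟩

lemma dd_pos_eq {N : ℕ} (s : Fin N) (i : ℕ) (hi : i < N) : dd s (pos s i hi) = i := by
  have := s.isLt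
  unfold dd pos
  dsimp only
  split_ifs <;> omega

lemma pos_shift {N : ℕ} (s s' : Fin N) (i : ℕ) (hi : i < N) (h : dd s s' + i < N) :
    pos s' i hi = pos s (dd s s' + i) h := by
  have h1 := s.isLt; have h2 := s'.isLt
  apply Fin.ext
  simp only [pos, dd] at h ⊢
  split_ifs at h ⊢ <;> omega

lemma congr_mk {F : Type*} {n : ℕ} (f : Fin n → F) {a b : ℕ} (ha : a < n) (hb : b < n)
    (h : a = b) : f ⟨a, ha⟩ = f ⟨b, hb⟩ := by subst h; rfl

def cyc {F : Type*} {n : ℕ} (c : Fin n → F) (s : Fin (2*n-1)) (r : Fin (n-1) → F) :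
    Fin (2*n-1) → F := fun t =>
  if h : dd s t < n then c ⟨dd s t, h⟩
  else r ⟨dd s t - n, by have h1 := dd_lt s t; have h2 := s.isLt; omega⟩

lemma cyc_window {F : Type*} {n : ℕ} (c : Fin n → F) (s : Fin (2*n-1)) (r : Fin (n-1) → F)
    (i : ℕ) (hi : i < n) (hi' : i < 2*n-1) :
    cyc c s r (pos s i hi') = c ⟨i, hi⟩ := by
  unfold cyc
  simp only [dd_pos_eq]
  rw [dif_pos hi]

lemma cyc_rest {F : Type*} {n : ℕ} (c : Fin n → F) (s : Fin (2*n-1)) (r : Fin (n-1) → F)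
    (j : ℕ) (hj : j < n - 1) (hi' : n + j < 2*n-1) :
    cyc c s r (pos s (n+j) hi') = r ⟨j, hj⟩ := by
  unfold cyc
  simp only [dd_pos_eq]
  rw [dif_neg (by omega)]
  exact congr_mk r _ _ (by omega)


lemma overlap_of_eq {F : Type*} {n : ℕ} (hn : 2 ≤ n) {u v : Fin n → F}
    {s s' : Fin (2*n-1)} {r r' : Fin (n-1) → F}
    (hne : s ≠ s') (hd : dd s s' < n)
    (heq : cyc u s r = cyc v s' r') :
    ∀ i : ℕ, ∀ hi : i < n - dd s s',
      v ⟨i, by omega⟩ = u ⟨dd s s' + i, by omega⟩ := by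
  intro i hi
  have hd0 : 0 < dd s s' := dd_pos_of_ne hne
  have hiN : i < 2*n-1 := by omega
  have hdiN : dd s s' + i < 2*n-1 := by omega
  have h1 := cyc_window v s' r' i (by omega) hiN
  have h2 := cyc_window u s r (dd s s' + i) (by omega) hdiN
  rw [← h1, ← heq, pos_shift s s' i hiN hdiN, h2]

theorem blackburn {F : Type*} [Fintype F] {n q : ℕ} (hn : 2 ≤ n) (hq : 2 ≤ q)
    (hF : Fintype.card F = q) (C : Set (Fin n → F)) (hC : NonOverlappingCode C) :
    (2 * n - 1) * C.ncard < q ^ n := by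
  have hne : Nonempty F := by rw [← Fintype.card_pos_iff]; omega
  obtain ⟨a⟩ := hne
  haveI : Fintype ↥C := (Set.toFinite C).fintype
  set Φ : ↥C × Fin (2*n-1) × (Fin (n-1) → F) → (Fin (2*n-1) → F) :=
    fun x => cyc x.1.1 x.2.1 x.2.2 with hΦ
  have hinj : Function.Injective Φ := by
    rintro ⟨⟨c, hc⟩, s, r⟩ ⟨⟨c', hc'⟩, s', r'⟩ heq
    simp only [hΦ] at heq
    by_cases hss : s = s'
    · subst hss
      have hcc : c = c' := by
        funext x
        obtain ⟨i, hi⟩ := x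
        have e1 := cyc_window c s r i hi (by omega)
        have e2 := cyc_window c' s r' i hi (by omega)
        rw [← e1, heq, e2]
      have hrr : r = r' := by
        funext x
        obtain ⟨j, hj⟩ := x
        have e1 := cyc_rest c s r j hj (by omega)
        have e2 := cyc_rest c' s r' j hj (by omega)
        rw [← e1, heq, e2]
      subst hcc; subst hrr; rfl
    · exfalso
      apply hC c hc c' hc'
      by_cases hdn : dd s s' < n
      · have hd0 : 0 < dd s s' := dd_pos_of_ne hss
        refine ⟨n - dd s s', by omega, by omega, Or.inr ?_⟩
        intro i hi
        have h := overlap_of_eq hn hss hdn heq i hi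
        exact h.trans (congr_mk c _ _ (by omega))
      · have hss' : s' ≠ s := Ne.symm hss
        have hsum := dd_add_dd hss
        have hd0 : 0 < dd s' s := dd_pos_of_ne hss'
        have hdn' : dd s' s < n := by omega
        refine ⟨n - dd s' s, by omega, by omega, Or.inl ?_⟩
        intro i hi
        have h := overlap_of_eq hn hss' hdn' heq.symm i hi
        exact h.trans (congr_mk c' _ _ (by omega))
  have hnsurj : ¬ Function.Surjective Φ := by
    intro hsurj
    obtain ⟨⟨⟨c, hc⟩, s, r⟩, hw⟩ := hsurj (fun _ => a)
    simp only [hΦ] at hw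
    have hall : ∀ j : ℕ, ∀ hj : j < n, c ⟨j, hj⟩ = a := by
      intro j hj
      have e1 := cyc_window c s r j hj (by omega)
      rw [hw] at e1
      exact e1.symm
    exact hC c hc c hc ⟨1, one_pos, by omega, Or.inl (fun i hi => by
      have : i = 0 := by omega
      subst this
      rw [hall 0 (by omega), hall (n - 1 + 0) (by omega)])⟩
  have hcard := Fintype.card_lt_of_injective_not_surjective Φ hinj hnsurj
  have hC1 : Fintype.card ↥C = C.ncard :=
    ((Set.ncard_eq_toFinset_card' C).trans (Set.toFinset_card C)).symm
  rw [Fintype.card_prod, Fintype.card_prod, Fintype.card_fin, Fintype.card_fun,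
    Fintype.card_fun, Fintype.card_fin, Fintype.card_fin, hF, hC1] at hcard
  have hpow : q ^ (2*n-1) = q ^ n * q ^ (n-1) := by
    rw [← pow_add]; congr 1; omega
  rw [hpow] at hcard
  have hcard' : ((2 * n - 1) * C.ncard) * q ^ (n-1) < q ^ n * q ^ (n-1) := by
    calc ((2 * n - 1) * C.ncard) * q ^ (n-1) = C.ncard * ((2*n-1) * q ^ (n-1)) := by ring
    _ < q ^ n * q ^ (n-1) := hcard
  exact lt_of_mul_lt_mul_right hcard' (Nat.zero_le _)

end BlackburnAux

/-- Theorem 1 of Blackburn, "Non-overlapping codes": if `n, q ≥ 2` and `F` has size `q`,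
then any non-overlapping code `C ⊆ F^n` satisfies `(2n-1)|C| < q^n`; equivalently,
`C(n,q) < q^n/(2n-1)`. -/
theorem stmt0 {F : Type*} [Fintype F] {n q : ℕ} (hn : 2 ≤ n) (hq : 2 ≤ q)
    (hF : Fintype.card F = q) :
    (∀ C : Set (Fin n → F), NonOverlappingCode C → (2 * n - 1) * C.ncard < q ^ n) ∧
    (maxNOCode n q : ℚ) < (q : ℚ) ^ n / (2 * (n : ℚ) - 1) := by
  constructor
  · exact fun C hC => BlackburnAux.blackburn hn hq hF C hC
  · set S := {m | ∃ C : Set (Fin n → Fin q), NonOverlappingCode C ∧ C.ncard = m} with hS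
    have hb : ∀ m ∈ S, (2 * n - 1) * m < q ^ n := by
      rintro m ⟨C, hC, rfl⟩
      exact BlackburnAux.blackburn hn hq (Fintype.card_fin q) C hC
    have hS0 : (0 : ℕ) ∈ S :=
      ⟨∅, fun u hu => absurd hu (Set.notMem_empty u), Set.ncard_empty _⟩
    have hbdd : BddAbove S := ⟨q ^ n, fun m hm =>
      le_of_lt (lt_of_le_of_lt (Nat.le_mul_of_pos_left m (by omega)) (hb m hm))⟩
    have hmem : sSup S ∈ S := Nat.sSup_mem ⟨0, hS0⟩ hbdd
    have hlt : (2 * n - 1) * sSup S < q ^ n := hb _ hmem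
    have hpos : (0 : ℚ) < 2 * (n : ℚ) - 1 := by
      have : (2 : ℚ) ≤ (n : ℚ) := by exact_mod_cast hn
      linarith
    rw [show maxNOCode n q = sSup S from rfl, lt_div_iff₀ hpos]
    have hcast : (((2 * n - 1 : ℕ) * sSup S : ℕ) : ℚ) < ((q ^ n : ℕ) : ℚ) :=
      Nat.cast_lt.mpr hlt
    rw [Nat.cast_mul, Nat.cast_sub (by omega : 1 ≤ 2 * n), Nat.cast_pow] at hcast
    push_cast at hcast ⊢
    linarith
end

section
/- Let n ≥ 2 be an integer, let F be a finite alphabet, and let C ⊆ F^n be a non-overlapping code. For any word w ∈ F^{2n−1}, there is at most one index i ∈ {1, 2, …, 2n−1} such that the cyclic subword of w of length n starting at position i belongs to C. -/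
/-- The cyclic subword of `w ∈ F^{2n-1}` of length `n` starting at position `i`
(0-indexed): the word `w_i w_{i+1} ⋯ w_{i+n-1}` with indices taken mod `2n-1`. -/
def cyclicSubword {F : Type*} {n : ℕ} (w : Fin (2 * n - 1) → F) (i : Fin (2 * n - 1)) :
    Fin n → F :=
  fun j => w ⟨((i : ℕ) + (j : ℕ)) % (2 * n - 1), Nat.mod_lt _ i.pos⟩

lemma key_aux {F : Type*} {n : ℕ} (hn : 2 ≤ n) (C : Set (Fin n → F))
    (hC : NonOverlappingCode C) (w : Fin (2 * n - 1) → F) (i j : Fin (2 * n - 1))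
    (hi : cyclicSubword w i ∈ C) (hj : cyclicSubword w j ∈ C)
    (d : ℕ) (hd0 : 0 < d) (hdn : d < n)
    (hij : ((i : ℕ) + d) % (2 * n - 1) = (j : ℕ)) : False := by
  refine hC _ hi _ hj ⟨n - d, by omega, by omega, Or.inr fun k hk => ?_⟩
  show w _ = w _
  congr 1
  apply Fin.ext
  show ((j : ℕ) + k) % (2 * n - 1) = ((i : ℕ) + (n - (n - d) + k)) % (2 * n - 1)
  have h1 : n - (n - d) = d := by omega
  rw [h1, ← hij, Nat.mod_add_mod, Nat.add_assoc]

/-- If `C ⊆ F^n` is a non-overlapping code, then for any word `w ∈ F^{2n-1}` there is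
at most one starting position whose length-`n` cyclic subword of `w` lies in `C`. -/
theorem stmt1 {F : Type*} {n : ℕ} (hn : 2 ≤ n) (C : Set (Fin n → F))
    (hC : NonOverlappingCode C) (w : Fin (2 * n - 1) → F) :
    ∀ i j : Fin (2 * n - 1), cyclicSubword w i ∈ C → cyclicSubword w j ∈ C → i = j := by
  intro i j hi hj
  by_contra hne
  have hN : 0 < 2 * n - 1 := by omega
  have hiN := i.isLt
  have hjN := j.isLt
  have hne' : (i : ℕ) ≠ (j : ℕ) := fun h => hne (Fin.ext h)
  set d := ((j : ℕ) + (2 * n - 1) - i) % (2 * n - 1) with hd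
  have hdlt : d < (2 * n - 1) := Nat.mod_lt _ hN
  have hij : ((i : ℕ) + d) % (2 * n - 1) = (j : ℕ) := by
    rw [hd, Nat.add_mod_mod]
    have h2 : (i : ℕ) + ((j : ℕ) + (2 * n - 1) - i) = (j : ℕ) + (2 * n - 1) := by omega
    rw [h2, Nat.add_mod_right, Nat.mod_eq_of_lt hjN]
  have hd0 : 0 < d := by
    rcases Nat.eq_zero_or_pos d with h | h
    · exfalso
      rw [h, Nat.add_zero, Nat.mod_eq_of_lt hiN] at hij
      exact hne' hij
    · exact h
  -- split (i+d) % (2 * n - 1) into cases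
  have hcase : (i : ℕ) + d = (j : ℕ) ∨ (i : ℕ) + d = (j : ℕ) + (2 * n - 1) := by
    rcases lt_or_ge ((i : ℕ) + d) (2 * n - 1) with h | h
    · left; rw [← hij, Nat.mod_eq_of_lt h]
    · right
      rw [Nat.mod_eq_sub_mod h, Nat.mod_eq_of_lt (by omega)] at hij
      omega
  rcases lt_or_ge d n with hdn | hdn
  · exact key_aux hn C hC w i j hi hj d hd0 hdn hij
  · -- use e = (2 * n - 1) - d going the other way
    set e := (2 * n - 1) - d with he
    have he0 : 0 < e := by omega
    have hen : e < n := by omega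
    have hji : ((j : ℕ) + e) % (2 * n - 1) = (i : ℕ) := by
      rcases hcase with h | h
      · have : (j : ℕ) + e = (i : ℕ) + (2 * n - 1) := by omega
        rw [this, Nat.add_mod_right, Nat.mod_eq_of_lt hiN]
      · have : (j : ℕ) + e = (i : ℕ) := by omega
        rw [this, Nat.mod_eq_of_lt hiN]
    exact key_aux hn C hC w j i hj hi e he0 hen hji
end

section
/- Let n ≥ 2 and q ≥ 2 be integers, let F = {0, 1, …, q−1}, and let k be an integer with 1 ≤ k ≤ n−1. Let C be the set of all words c ∈ F^n such that: c_i = 0 for 1 ≤ i ≤ k; c_{k+1} ≠ 0 and c_n ≠ 0; and the word c_{k+2} c_{k+3} ⋯ c_{n−1} does not contain k consecutive zeroes. Then C is a non-overlapping code. -/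
/-- The code of Construction 1 (Chee, Kiah, Purkayastha and Wang): all words
`c ∈ {0,…,q-1}^n` whose first `k` letters are `0`, whose `(k+1)`st and `n`th letters are
nonzero, and such that `c_{k+2} ⋯ c_{n-1}` contains no `k` consecutive zeroes. -/
def CheeCode (n q k : ℕ) : Set (Fin n → Fin q) :=
  {c | (∀ i : Fin n, (i : ℕ) < k → (c i : ℕ) = 0) ∧
       (∀ i : Fin n, (i : ℕ) = k → (c i : ℕ) ≠ 0) ∧
       (∀ i : Fin n, (i : ℕ) = n - 1 → (c i : ℕ) ≠ 0) ∧
       ¬ ∃ s : ℕ, k + 1 ≤ s ∧ s + k ≤ n - 1 ∧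
          ∀ j : Fin n, s ≤ (j : ℕ) → (j : ℕ) < s + k → (c j : ℕ) = 0}

/-- Construction 1 (Chee, Kiah, Purkayastha and Wang) yields a non-overlapping code. -/
theorem stmt4 {n q k : ℕ} (hn : 2 ≤ n) (hq : 2 ≤ q) (hk1 : 1 ≤ k) (hk2 : k ≤ n - 1) :
    NonOverlappingCode (CheeCode n q k) := by
  have key : ∀ u ∈ CheeCode n q k, ∀ v ∈ CheeCode n q k,
      ∀ m : ℕ, 0 < m → ∀ h2 : m < n,
      ¬ (∀ i : ℕ, ∀ hi : i < m, u ⟨i, hi.trans h2⟩ = v ⟨n - m + i, by omega⟩) := by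
    rintro u ⟨hu1, hu2, hu3, hu4⟩ v ⟨hv1, hv2, hv3, hv4⟩ m hm h2 hov
    by_cases hmk : m ≤ k
    · have h1 := hov (m - 1) (by omega)
      have hz : (u ⟨m - 1, by omega⟩ : ℕ) = 0 := hu1 _ (by simp; omega)
      have hnz : (v ⟨n - m + (m - 1), by omega⟩ : ℕ) ≠ 0 := hv3 _ (by simp; omega)
      rw [h1] at hz
      exact hnz hz
    · push_neg at hmk
      have hz : ∀ j : Fin n, n - m ≤ (j : ℕ) → (j : ℕ) < n - m + k → (v j : ℕ) = 0 := by
        intro j hj1 hj2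
        have h1 := hov ((j : ℕ) - (n - m)) (by omega)
        have hu0 : (u ⟨(j : ℕ) - (n - m), by omega⟩ : ℕ) = 0 := hu1 _ (by simp; omega)
        rw [h1] at hu0
        have he : (⟨n - m + ((j : ℕ) - (n - m)), by omega⟩ : Fin n) = j := by
          apply Fin.ext; simp; omega
        rwa [he] at hu0
      by_cases hsk : n - m ≤ k
      · have h0 := hz ⟨k, by omega⟩ (by simpa using hsk) (by simp; omega)
        exact hv2 ⟨k, by omega⟩ (by simp) h0
      · push_neg at hsk
        exact hv4 ⟨n - m, by omega, by omega, hz⟩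
  rintro u hu v hv ⟨m, hm, h2, h | h⟩
  · exact key u hu v hv m hm h2 h
  · exact key v hv u hu m hm h2 h
end

section
/- Let q ≥ 2 be an integer and let n, k be integers with k ≥ 1 and 2k ≤ n−2. Then C(n,q) ≥ (q−1)^2·(q^{n−k−2} − (n−2k−1)·q^{n−2k−2}), where the right-hand side is interpreted as an integer (possibly negative). -/
open Finset

/-- `f : Fin L → Fin q` is "good" if it contains no run of `k` consecutive zeros. -/
def goodP {q : ℕ} [NeZero q] (k L : ℕ) (f : Fin L → Fin q) : Prop :=
  ∀ j, j + k ≤ L → ∃ i : Fin L, j ≤ (i : ℕ) ∧ (i : ℕ) < j + k ∧ f i ≠ 0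

open scoped Classical in
lemma cardA {q : ℕ} [NeZero q] (k L j : ℕ) (hj : j + k ≤ L) :
    (univ.filter (fun f : Fin L → Fin q => ∀ i : Fin L, j ≤ (i:ℕ) → (i:ℕ) < j + k → f i = 0)).card
      ≤ q ^ (L - k) := by
  classical
  have hcard : (univ : Finset (Fin (L - k) → Fin q)).card = q ^ (L - k) := by
    simp
  rw [← hcard]
  apply Finset.card_le_card_of_injOn
      (fun f => fun m : Fin (L - k) =>
        f (if h : (m : ℕ) < j then ⟨m, by omega⟩ else ⟨(m:ℕ) + k, by have := m.isLt; omega⟩))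
  · intro f _; exact mem_univ _
  · intro f1 hf1 f2 hf2 h
    simp only [mem_coe, mem_filter] at hf1 hf2
    funext i
    rcases lt_or_ge (i : ℕ) j with hij | hij
    · have hiL : (i : ℕ) < L - k := by omega
      have h2 := congrFun h ⟨(i : ℕ), hiL⟩
      beta_reduce at h2
      rw [dif_pos (show (((⟨(i:ℕ), hiL⟩ : Fin (L - k)) : ℕ) < j) from hij)] at h2
      have hieq : i = (⟨((⟨(i:ℕ), hiL⟩ : Fin (L - k)) : ℕ), by have := i.isLt; omega⟩ : Fin L) :=
        Fin.ext rfl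
      rw [hieq]
      exact h2
    · rcases lt_or_ge (i : ℕ) (j + k) with hik | hik
      · rw [hf1.2 i hij hik, hf2.2 i hij hik]
      · have hm : (i : ℕ) - k < L - k := by have := i.isLt; omega
        have h2 := congrFun h ⟨(i : ℕ) - k, hm⟩
        beta_reduce at h2
        have hlt : ¬ (((⟨(i:ℕ) - k, hm⟩ : Fin (L - k)) : ℕ) < j) := by
          simp only [Fin.val_mk]
          omega
        rw [dif_neg hlt] at h2
        have hieq : i = (⟨((⟨(i:ℕ) - k, hm⟩ : Fin (L - k)) : ℕ) + k,
            by have := i.isLt; simp only [Fin.val_mk]; omega⟩ : Fin L) := by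
          apply Fin.ext
          simp only [Fin.val_mk]
          omega
        rw [hieq]
        exact h2

open scoped Classical in
lemma card_good {q : ℕ} [NeZero q] (k L : ℕ) (hkL : k ≤ L) :
    ((q:ℤ) ^ L - (L - k + 1 : ℕ) * (q:ℤ) ^ (L - k))
      ≤ ((univ.filter (goodP (q := q) k L)).card : ℤ) := by
  classical
  have hsplit : (univ.filter (goodP (q := q) k L)).card
      + (univ.filter (fun f => ¬ goodP (q := q) k L f)).card = q ^ L := by
    rw [Finset.card_filter_add_card_filter_not]
    simp
  have hbad : (univ.filter (fun f : Fin L → Fin q => ¬ goodP k L f)).card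
      ≤ (L - k + 1) * q ^ (L - k) := by
    have hsub : (univ.filter (fun f : Fin L → Fin q => ¬ goodP k L f))
        ⊆ (Finset.range (L - k + 1)).biUnion
          (fun j => univ.filter (fun f : Fin L → Fin q =>
            ∀ i : Fin L, j ≤ (i:ℕ) → (i:ℕ) < j + k → f i = 0)) := by
      intro f hf
      rw [Finset.mem_filter] at hf
      simp only [mem_filter, mem_univ, true_and, goodP] at hf
      push_neg at hf
      obtain ⟨j, hj, hrun⟩ := hf
      refine Finset.mem_biUnion.2 ⟨j, Finset.mem_range.2 (by omega), ?_⟩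
      simp only [mem_filter, mem_univ, true_and]
      intro i h1 h2
      exact hrun i h1 h2
    calc (univ.filter (fun f : Fin L → Fin q => ¬ goodP k L f)).card
        ≤ _ := Finset.card_le_card hsub
      _ ≤ ∑ j ∈ Finset.range (L - k + 1), (univ.filter (fun f : Fin L → Fin q =>
            ∀ i : Fin L, j ≤ (i:ℕ) → (i:ℕ) < j + k → f i = 0)).card :=
        Finset.card_biUnion_le
      _ ≤ ∑ j ∈ Finset.range (L - k + 1), q ^ (L - k) := by
        apply Finset.sum_le_sum
        intro j hj
        exact cardA k L j (by simp at hj; omega)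
      _ = (L - k + 1) * q ^ (L - k) := by simp [mul_comm]
  have h1 : ((univ.filter (goodP (q := q) k L)).card : ℤ)
      = (q:ℤ) ^ L - (univ.filter (fun f => ¬ goodP (q := q) k L f)).card := by
    have h2 := congrArg (fun x : ℕ => (x : ℤ)) hsplit
    push_cast at h2 ⊢
    linarith
  rw [h1]
  have h3 : ((univ.filter (fun f => ¬ goodP (q := q) k L f)).card : ℤ)
      ≤ ((L - k + 1 : ℕ) : ℤ) * (q:ℤ) ^ (L - k) := by
    exact_mod_cast Nat.cast_le.2 hbad
  linarith

/-- Blackburn's code: words starting with `0^k`, then a nonzero symbol, ending with a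
nonzero symbol, and with no run of `k` consecutive zeros in positions `k+1,…,n-2`. -/
def theCode (n q k : ℕ) [NeZero q] : Set (Fin n → Fin q) :=
  {w | (∀ i : Fin n, (i:ℕ) < k → w i = 0) ∧ (∀ i : Fin n, (i:ℕ) = k → w i ≠ 0) ∧
       (∀ i : Fin n, (i:ℕ) = n - 1 → w i ≠ 0) ∧
       ∀ j, k + 1 ≤ j → j + k ≤ n - 1 →
         ∃ i : Fin n, j ≤ (i:ℕ) ∧ (i:ℕ) < j + k ∧ w i ≠ 0}

lemma theCode_half {n q k : ℕ} [NeZero q]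
    {u v : Fin n → Fin q} (hu : u ∈ theCode n q k) (hv : v ∈ theCode n q k)
    {m : ℕ} (hm0 : 0 < m) (hmn : m < n)
    (h : ∀ i : ℕ, ∀ hi : i < m, u ⟨i, hi.trans hmn⟩ = v ⟨n - m + i, by omega⟩) : False := by
  obtain ⟨hu1, hu2, hu3, hu4⟩ := hu
  obtain ⟨hv1, hv2, hv3, hv4⟩ := hv
  rcases le_or_gt m k with hmk | hmk
  · -- m ≤ k : last symbol of v would be 0
    have h1 := h (m - 1) (by omega)
    have h2 : u ⟨m - 1, by omega⟩ = 0 := hu1 _ (by simp only [Fin.val_mk]; omega)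
    have h3 : v ⟨n - m + (m - 1), by omega⟩ ≠ 0 :=
      hv3 _ (by simp only [Fin.val_mk]; omega)
    exact h3 (h1 ▸ h2)
  · -- m > k : v has a run of k zeros at positions n-m, …, n-m+k-1
    have hz : ∀ i : Fin n, n - m ≤ (i:ℕ) → (i:ℕ) < n - m + k → v i = 0 := by
      intro i h1 h2
      have ht : (i:ℕ) - (n - m) < m := by have := i.isLt; omega
      have h3 := h ((i:ℕ) - (n - m)) ht
      have h4 : u ⟨(i:ℕ) - (n - m), by omega⟩ = 0 :=
        hu1 _ (by simp only [Fin.val_mk]; omega)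
      have hieq : i = (⟨n - m + ((i:ℕ) - (n - m)), by omega⟩ : Fin n) := by
        apply Fin.ext; simp only [Fin.val_mk]; omega
      rw [hieq]
      exact h3 ▸ h4
    rcases le_or_gt (k + 1) (n - m) with hc | hc
    · obtain ⟨i, hi1, hi2, hi3⟩ := hv4 (n - m) hc (by omega)
      exact hi3 (hz i hi1 hi2)
    · have h5 : v ⟨k, by omega⟩ = 0 :=
        hz _ (by simp only [Fin.val_mk]; omega) (by simp only [Fin.val_mk]; omega)
      exact hv2 ⟨k, by omega⟩ rfl h5

lemma theCode_nonoverlapping {n q k : ℕ} [NeZero q] :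
    NonOverlappingCode (theCode n q k) := by
  intro u hu v hv hov
  obtain ⟨m, hm0, hmn, hor | hor⟩ := hov
  · exact theCode_half hu hv hm0 hmn hor
  · exact theCode_half hv hu hm0 hmn hor

/-- Build a word of `theCode` from the two nonzero symbols and the middle part. -/
def embWord (n q k : ℕ) [NeZero q] (a b : Fin q) (f : Fin (n - k - 2) → Fin q) :
    Fin n → Fin q := fun i =>
  if h1 : (i:ℕ) < k then 0
  else if h2 : (i:ℕ) = k then a
  else if h3 : (i:ℕ) = n - 1 then b
  else f ⟨(i:ℕ) - (k + 1), by have := i.isLt; omega⟩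

lemma embWord_mem {n q k : ℕ} [NeZero q] (hk : 1 ≤ k) (hn : 2 * k + 2 ≤ n)
    {a b : Fin q} (ha : a ≠ 0) (hb : b ≠ 0) {f : Fin (n - k - 2) → Fin q}
    (hf : goodP k (n - k - 2) f) : embWord n q k a b f ∈ theCode n q k := by
  refine ⟨?_, ?_, ?_, ?_⟩
  · intro i hi
    simp only [embWord, dif_pos hi]
  · intro i hi
    simp only [embWord]
    rw [dif_neg (by omega), dif_pos hi]
    exact ha
  · intro i hi
    simp only [embWord]
    rw [dif_neg (by omega), dif_neg (by omega), dif_pos hi]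
    exact hb
  · intro j hj1 hj2
    obtain ⟨i', hi1, hi2, hi3⟩ := hf (j - (k + 1)) (by omega)
    have hi'L := i'.isLt
    refine ⟨⟨(i':ℕ) + (k + 1), by omega⟩, by simp only [Fin.val_mk]; omega,
      by simp only [Fin.val_mk]; omega, ?_⟩
    simp only [embWord]
    rw [dif_neg (by omega), dif_neg (by omega), dif_neg (by omega)]
    have hieq : (⟨((⟨(i':ℕ) + (k + 1), by omega⟩ : Fin n) : ℕ) - (k + 1), by
        simp only [Fin.val_mk]; omega⟩ : Fin (n - k - 2)) = i' := by
      apply Fin.ext; simp only [Fin.val_mk]; omega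
    rw [hieq]
    exact hi3

lemma embWord_inj {n q k : ℕ} [NeZero q] (hk : 1 ≤ k) (hn : 2 * k + 2 ≤ n)
    {a b a' b' : Fin q} {f f' : Fin (n - k - 2) → Fin q}
    (h : embWord n q k a b f = embWord n q k a' b' f') : a = a' ∧ b = b' ∧ f = f' := by
  refine ⟨?_, ?_, ?_⟩
  · have h2 := congrFun h ⟨k, by omega⟩
    simpa only [embWord, Fin.val_mk, dif_neg (lt_irrefl k), dif_pos rfl, dite_true] using h2
  · have h2 := congrFun h ⟨n - 1, by omega⟩
    rw [show (embWord n q k a b f ⟨n - 1, by omega⟩) = b by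
        simp only [embWord, Fin.val_mk]
        rw [dif_neg (by omega), dif_neg (by omega), dif_pos trivial],
      show (embWord n q k a' b' f' ⟨n - 1, by omega⟩) = b' by
        simp only [embWord, Fin.val_mk]
        rw [dif_neg (by omega), dif_neg (by omega), dif_pos trivial]] at h2
    exact h2
  · funext i'
    have hi'L := i'.isLt
    have h2 := congrFun h ⟨(i':ℕ) + (k + 1), by omega⟩
    have key : ∀ (g1 g2 : Fin q) (gf : Fin (n - k - 2) → Fin q),
        embWord n q k g1 g2 gf ⟨(i':ℕ) + (k + 1), by omega⟩ = gf i' := by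
      intro g1 g2 gf
      simp only [embWord, Fin.val_mk]
      rw [dif_neg (by omega), dif_neg (by omega), dif_neg (by omega)]
      congr 1
      apply Fin.ext
      simp only [Fin.val_mk]
      omega
    rw [key, key] at h2
    exact h2

/-- Lower bound from the proof of Lemma 2 of Blackburn, "Non-overlapping codes":
for `q ≥ 2`, `k ≥ 1` and `2k ≤ n - 2`,
`C(n,q) ≥ (q-1)² (q^{n-k-2} - (n-2k-1) q^{n-2k-2})`. -/
theorem stmt5 {n q k : ℕ} (hq : 2 ≤ q) (hk : 1 ≤ k) (hkn : 2 * k ≤ n - 2) :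
    ((q : ℤ) - 1) ^ 2 * ((q : ℤ) ^ (n - k - 2) - ((n : ℤ) - 2 * k - 1) * (q : ℤ) ^ (n - 2 * k - 2))
      ≤ (maxNOCode n q : ℤ) := by
  classical
  haveI : NeZero q := ⟨by omega⟩
  have hn : 2 * k + 2 ≤ n := by omega
  set L := n - k - 2 with hL
  have hkL : k ≤ L := by omega
  -- the finsets
  let G : Finset (Fin L → Fin q) := univ.filter (goodP k L)
  let D : Finset (Fin q × Fin q × (Fin L → Fin q)) :=
    (univ.filter (fun a : Fin q => a ≠ 0)) ×ˢ (univ.filter (fun a : Fin q => a ≠ 0)) ×ˢ G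
  have hne : (univ.filter (fun a : Fin q => a ≠ 0)).card = q - 1 := by
    rw [Finset.filter_ne', Finset.card_erase_of_mem (mem_univ 0), card_univ, Fintype.card_fin]
  have hDcard : D.card = (q - 1) * ((q - 1) * G.card) := by
    simp only [D, Finset.card_product, hne]
  -- injection into the code
  have h1 : D.card ≤ (theCode n q k).ncard := by
    have hsub : (fun p : Fin q × Fin q × (Fin L → Fin q) => embWord n q k p.1 p.2.1 p.2.2) '' ↑D
        ⊆ theCode n q k := by
      rintro w ⟨⟨a, b, f⟩, hp, rfl⟩
      simp only [D, G, Finset.mem_coe, Finset.mem_product, Finset.mem_filter, Finset.mem_univ,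
        true_and] at hp
      exact embWord_mem hk hn hp.1 hp.2.1 hp.2.2
    have hinj : Set.InjOn (fun p : Fin q × Fin q × (Fin L → Fin q) =>
        embWord n q k p.1 p.2.1 p.2.2) ↑D := by
      rintro ⟨a, b, f⟩ _ ⟨a', b', f'⟩ _ heq
      obtain ⟨e1, e2, e3⟩ := embWord_inj hk hn heq
      exact Prod.ext e1 (Prod.ext e2 e3)
    calc D.card = (↑D : Set (Fin q × Fin q × (Fin L → Fin q))).ncard :=
          (Set.ncard_coe_finset D).symm
      _ = ((fun p : Fin q × Fin q × (Fin L → Fin q) =>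
            embWord n q k p.1 p.2.1 p.2.2) '' ↑D).ncard :=
          (Set.ncard_image_of_injOn hinj).symm
      _ ≤ (theCode n q k).ncard := Set.ncard_le_ncard hsub (Set.toFinite _)
  -- the code witnesses the sSup bound
  have h2 : (theCode n q k).ncard ≤ maxNOCode n q := by
    apply le_csSup
    · refine ⟨q ^ n, ?_⟩
      rintro m ⟨C', _, rfl⟩
      calc C'.ncard ≤ (Set.univ : Set (Fin n → Fin q)).ncard :=
            Set.ncard_le_ncard (Set.subset_univ _) Set.finite_univ
        _ = q ^ n := by simp [Set.ncard_univ, Nat.card_eq_fintype_card]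
    · exact ⟨theCode n q k, theCode_nonoverlapping, rfl⟩
  -- arithmetic
  have hgood := card_good (q := q) k L hkL
  have hexp1 : n - 2 * k - 2 = L - k := by omega
  have hcast1 : ((L - k + 1 : ℕ) : ℤ) = (n : ℤ) - 2 * k - 1 := by omega
  have hcast2 : ((q - 1 : ℕ) : ℤ) = (q : ℤ) - 1 := by omega
  rw [hexp1]
  calc ((q : ℤ) - 1) ^ 2 * ((q : ℤ) ^ L - ((n : ℤ) - 2 * k - 1) * (q : ℤ) ^ (L - k))
      = ((q : ℤ) - 1) ^ 2 * ((q:ℤ) ^ L - ((L - k + 1 : ℕ) : ℤ) * (q:ℤ) ^ (L - k)) := by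
        rw [hcast1]
    _ ≤ ((q : ℤ) - 1) ^ 2 * (G.card : ℤ) := by
        apply mul_le_mul_of_nonneg_left hgood (by positivity)
    _ = (D.card : ℤ) := by
        rw [hDcard]
        push_cast [hcast2]
        ring
    _ ≤ ((theCode n q k).ncard : ℤ) := by exact_mod_cast h1
    _ ≤ (maxNOCode n q : ℤ) := by exact_mod_cast h2
end

section
/- Let q ≥ 2 be a fixed integer. Then liminf_{n→∞} C(n,q)/(q^n/n) ≥ (q−1)^2·(2q−1)/(4q^4), where the liminf is taken over integers n tending to infinity. -/
open Finset

section Aux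
variable {q : ℕ}

lemma ncard_pi_cond (n : ℕ) (p : ℕ → Fin q → Prop) :
    {w : Fin n → Fin q | ∀ i : Fin n, p i.val (w i)}.ncard
      = ∏ i ∈ Finset.range n, Nat.card {b : Fin q // p i b} := by
  classical
  rw [← Nat.card_coe_set_eq]
  have e : {w : Fin n → Fin q | ∀ i : Fin n, p i.val (w i)} ≃ ∀ i : Fin n, {b : Fin q // p i.val b} :=
    Equiv.subtypePiEquivPi
  rw [Nat.card_congr e, Nat.card_pi, Finset.prod_range fun j => Nat.card {b : Fin q // p j b}]

lemma card_sub_eq [NeZero q] : Nat.card {b : Fin q // b = 0} = 1 := by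
  rw [Nat.card_eq_fintype_card, Fintype.card_subtype_eq]

lemma card_sub_ne [NeZero q] : Nat.card {b : Fin q // ¬ b = 0} = q - 1 := by
  rw [Nat.card_eq_fintype_card, Fintype.card_subtype_compl, Fintype.card_subtype_eq,
    Fintype.card_fin]

lemma card_sub_true : Nat.card {b : Fin q // True} = q := by
  rw [Nat.card_congr (Equiv.subtypeUnivEquiv fun _ => trivial), Nat.card_eq_fintype_card,
    Fintype.card_fin]

end Aux

/-- Per-coordinate condition for Blackburn's construction. -/
def pDcond (q n k i : ℕ) (b : Fin q) : Prop :=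
  (i < k → b.val = 0) ∧ (i = k → ¬ b.val = 0) ∧ (i = n - 1 → ¬ b.val = 0)

/-- Blackburn's non-overlapping code: words starting with `k` zeros, then a nonzero
symbol, ending with a nonzero symbol, and with no run of `k` zeros after position `k`. -/
def blkCode (n q k : ℕ) : Set (Fin n → Fin q) :=
  {w | (∀ i : Fin n, pDcond q n k i.val (w i)) ∧
    ∀ j : ℕ, k ≤ j → j + k ≤ n → ∃ i : Fin n, j ≤ i.val ∧ i.val < j + k ∧ ¬ (w i).val = 0}

lemma blk_no_pref {q n k : ℕ} (hk : 1 ≤ k) (hn : 2 * k + 2 ≤ n)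
    {u v : Fin n → Fin q} (hu : u ∈ blkCode n q k) (hv : v ∈ blkCode n q k)
    (m : ℕ) (h1 : 0 < m) (h2 : m < n)
    (h : ∀ i : ℕ, ∀ hi : i < m, u ⟨i, hi.trans h2⟩ = v ⟨n - m + i, by omega⟩) : False := by
  obtain ⟨hu1, hu2⟩ := hu
  obtain ⟨hv1, hv2⟩ := hv
  rcases le_or_gt m k with hmk | hmk
  · -- short overlap: prefix of u is all zero, but suffix of v ends in a nonzero symbol
    have h' := h (m - 1) (by omega)
    have e1 : (u ⟨m - 1, by omega⟩).val = 0 := (hu1 _).1 (by simp; omega)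
    have e2 : ¬ (v ⟨n - m + (m - 1), by omega⟩).val = 0 := (hv1 _).2.2 (by simp; omega)
    exact e2 (by rw [← h']; exact e1)
  · rcases lt_or_ge (n - m) k with hnm | hnm
    · -- suffix of v contains position k of v, which must be zero: contradiction
      have h' := h (k - (n - m)) (by omega)
      have e1 : (u ⟨k - (n - m), by omega⟩).val = 0 := (hu1 _).1 (by simp; omega)
      have e2 : ¬ (v ⟨n - m + (k - (n - m)), by omega⟩).val = 0 :=
        (hv1 _).2.1 (by simp; omega)
      exact e2 (by rw [← h']; exact e1)
    · -- v has a run of k zeros starting at position n - m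
      obtain ⟨i, hji, hijk, hine⟩ := hv2 (n - m) hnm (by omega)
      have h' := h (i.val - (n - m)) (by omega)
      have e1 : (u ⟨i.val - (n - m), by omega⟩).val = 0 := (hu1 _).1 (by simp; omega)
      have hieq : (⟨n - m + (i.val - (n - m)), by omega⟩ : Fin n) = i := by
        apply Fin.ext; simp; omega
      rw [hieq] at h'
      exact hine (by rw [← h']; exact e1)

lemma blk_nonOverlapping {q n k : ℕ} (hk : 1 ≤ k) (hn : 2 * k + 2 ≤ n) :
    NonOverlappingCode (blkCode n q k) := by
  intro u hu v hv hov
  obtain ⟨m, h1, h2, hc⟩ := hov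
  rcases hc with h | h
  · exact blk_no_pref hk hn hu hv m h1 h2 h
  · exact blk_no_pref hk hn hv hu m h1 h2 h
lemma card_D {q k b n : ℕ} (hq : 2 ≤ q) (hk : 1 ≤ k) (hn : n = b + 2 * k + 2) :
    {w : Fin n → Fin q | ∀ i : Fin n, pDcond q n k i.val (w i)}.ncard
      = (q - 1) ^ 2 * q ^ (b + k) := by
  classical
  haveI : NeZero q := ⟨by omega⟩
  have hcnt : ∀ i ∈ Finset.range n, Nat.card {x : Fin q // pDcond q n k i x} =
      (if i < k then 1 else if i = k then q - 1 else if i = n - 1 then q - 1 else q) := by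
    intro i hi
    simp only [Finset.mem_range] at hi
    rcases lt_or_ge i k with h1 | h1
    · rw [if_pos h1]
      have : ∀ x : Fin q, pDcond q n k i x ↔ x = 0 := by
        intro x
        unfold pDcond
        rw [Fin.ext_iff, Fin.val_zero]
        constructor
        · exact fun hx => hx.1 h1
        · intro hx; refine ⟨fun _ => hx, fun hik => by omega, fun hin => by omega⟩
      rw [Nat.card_congr (Equiv.subtypeEquivRight this), _root_.card_sub_eq]
    · rw [if_neg (by omega)]
      rcases eq_or_ne i k with h2 | h2
      · rw [if_pos h2]
        have : ∀ x : Fin q, pDcond q n k i x ↔ ¬ x = 0 := by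
          intro x
          unfold pDcond
          rw [Fin.ext_iff, Fin.val_zero]
          constructor
          · exact fun hx => hx.2.1 h2
          · intro hx; exact ⟨fun h' => by omega, fun _ => hx, fun hin => by omega⟩
        rw [Nat.card_congr (Equiv.subtypeEquivRight this), card_sub_ne]
      · rw [if_neg h2]
        rcases eq_or_ne i (n - 1) with h3 | h3
        · rw [if_pos h3]
          have : ∀ x : Fin q, pDcond q n k i x ↔ ¬ x = 0 := by
            intro x
            unfold pDcond
            rw [Fin.ext_iff, Fin.val_zero]
            constructor
            · exact fun hx => hx.2.2 h3
            · intro hx; exact ⟨fun h' => by omega, fun h' => by omega, fun _ => hx⟩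
          rw [Nat.card_congr (Equiv.subtypeEquivRight this), card_sub_ne]
        · rw [if_neg h3]
          have : ∀ x : Fin q, pDcond q n k i x ↔ True := by
            intro x
            unfold pDcond
            simp only [iff_true]
            exact ⟨fun h' => by omega, fun h' => by omega, fun h' => by omega⟩
          rw [Nat.card_congr (Equiv.subtypeEquivRight this), card_sub_true]
  rw [ncard_pi_cond, Finset.prod_congr rfl hcnt]
  have hsplit := Finset.prod_range_mul_prod_Ico
    (fun i => if i < k then 1 else if i = k then q - 1 else if i = n - 1 then q - 1 else q)
    (show k ≤ n by omega)
  rw [← hsplit]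
  have h1 : (∏ i ∈ Finset.range k,
      (if i < k then 1 else if i = k then q - 1 else if i = n - 1 then q - 1 else q)) = 1 :=
    Finset.prod_eq_one fun i hi => if_pos (Finset.mem_range.mp hi)
  rw [h1, one_mul, Finset.prod_eq_prod_Ico_succ_bot (show k < n by omega)]
  rw [if_neg (by omega), if_pos rfl]
  have hn1 : n = (b + 2 * k + 1) + 1 := by omega
  rw [hn1, Finset.prod_Ico_succ_top (by omega)]
  rw [if_neg (by omega), if_neg (by omega), if_pos (by omega)]
  simp only [Nat.add_sub_cancel]
  have h2 : (∏ i ∈ Finset.Ico (k + 1) (b + 2 * k + 1),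
      (if i < k then 1 else if i = k then q - 1 else if i = b + 2 * k + 1 then q - 1 else q))
      = q ^ (b + k) := by
    rw [Finset.prod_congr rfl (g := fun _ => q) fun i hi => by
      simp only [Finset.mem_Ico] at hi
      rw [if_neg (by omega), if_neg (by omega), if_neg (by omega)]]
    rw [Finset.prod_const, Nat.card_Ico]
    congr 1
    omega
  rw [h2]
  ring
lemma card_Bad {q k b n : ℕ} (hq : 2 ≤ q) (hk : 1 ≤ k) (hn : n = b + 2 * k + 2)
    {j : ℕ} (hj1 : k + 1 ≤ j) (hj2 : j + k ≤ n - 1) :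
    {w : Fin n → Fin q | ∀ i : Fin n,
        pDcond q n k i.val (w i) ∧ (j ≤ i.val → i.val < j + k → (w i).val = 0)}.ncard
      ≤ (q - 1) ^ 2 * q ^ b := by
  classical
  haveI : NeZero q := ⟨by omega⟩
  obtain ⟨G, hG⟩ : ∃ G : ℕ → ℕ, G = fun i =>
      (if i < k ∨ (j ≤ i ∧ i < j + k) then 1 else if i = k then q - 1 else if i = n - 1 then q - 1 else q) :=
    ⟨_, rfl⟩
  have hcnt : ∀ i ∈ Finset.range n,
      Nat.card {x : Fin q // pDcond q n k i x ∧ (j ≤ i → i < j + k → x.val = 0)} ≤ G i := by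
    intro i hi
    simp only [Finset.mem_range] at hi
    rw [Nat.card_eq_fintype_card]
    simp only [hG]
    rcases em (i < k ∨ (j ≤ i ∧ i < j + k)) with h1 | h1
    · rw [if_pos h1]
      calc Fintype.card {x : Fin q // pDcond q n k i x ∧ (j ≤ i → i < j + k → x.val = 0)}
          ≤ Fintype.card {x : Fin q // x = 0} := by
            apply Fintype.card_subtype_mono
            intro x hx
            rw [Fin.ext_iff, Fin.val_zero]
            rcases h1 with h | h
            · exact hx.1.1 h
            · exact hx.2 h.1 h.2
        _ = 1 := Fintype.card_subtype_eq 0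
    · rw [if_neg h1]
      push_neg at h1
      rcases eq_or_ne i k with h2 | h2
      · rw [if_pos h2]
        calc Fintype.card {x : Fin q // pDcond q n k i x ∧ (j ≤ i → i < j + k → x.val = 0)}
            ≤ Fintype.card {x : Fin q // ¬ x = 0} := by
              apply Fintype.card_subtype_mono
              intro x hx
              rw [Fin.ext_iff, Fin.val_zero]
              exact hx.1.2.1 h2
          _ = q - 1 := by
              rw [Fintype.card_subtype_compl, Fintype.card_subtype_eq, Fintype.card_fin]
      · rw [if_neg h2]
        rcases eq_or_ne i (n - 1) with h3 | h3
        · rw [if_pos h3]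
          calc Fintype.card {x : Fin q // pDcond q n k i x ∧ (j ≤ i → i < j + k → x.val = 0)}
              ≤ Fintype.card {x : Fin q // ¬ x = 0} := by
                apply Fintype.card_subtype_mono
                intro x hx
                rw [Fin.ext_iff, Fin.val_zero]
                exact hx.1.2.2 h3
            _ = q - 1 := by
                rw [Fintype.card_subtype_compl, Fintype.card_subtype_eq, Fintype.card_fin]
        · rw [if_neg h3]
          calc Fintype.card {x : Fin q // pDcond q n k i x ∧ (j ≤ i → i < j + k → x.val = 0)}
              ≤ Fintype.card (Fin q) := Fintype.card_subtype_le _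
            _ = q := Fintype.card_fin q
  have hpi := ncard_pi_cond (q := q) n
    (fun i x => pDcond q n k i x ∧ (j ≤ i → i < j + k → x.val = 0))
  rw [hpi]
  calc (∏ i ∈ Finset.range n,
        Nat.card {x : Fin q // pDcond q n k i x ∧ (j ≤ i → i < j + k → x.val = 0)})
      ≤ ∏ i ∈ Finset.range n, G i := Finset.prod_le_prod' hcnt
    _ ≤ (q - 1) ^ 2 * q ^ b := by
      clear hcnt hpi
      obtain ⟨S, hS⟩ : ∃ S : Finset ℕ, S = Finset.range k ∪ Finset.Ico j (j + k) := ⟨_, rfl⟩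
      have hSsub : S ⊆ Finset.range n := by
        intro x hx
        simp only [hS, Finset.mem_union, Finset.mem_range, Finset.mem_Ico] at hx ⊢
        omega
      rw [← Finset.prod_sdiff hSsub]
      have hone : (∏ i ∈ S, G i) = 1 := by
        apply Finset.prod_eq_one
        intro x hx
        simp only [hS, Finset.mem_union, Finset.mem_range, Finset.mem_Ico] at hx
        simp only [hG]
        exact if_pos hx
      rw [hone, mul_one]
      have hcardS : S.card = 2 * k := by
        rw [hS, Finset.card_union_of_disjoint, Finset.card_range, Nat.card_Ico]
        · omega
        · rw [Finset.disjoint_left]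
          intro x hx hx'
          simp only [Finset.mem_range] at hx
          simp only [Finset.mem_Ico] at hx'
          omega
      have hmemS : ∀ x, x ∈ S ↔ (x < k ∨ (j ≤ x ∧ x < j + k)) := by
        intro x
        simp [hS, Finset.mem_union, Finset.mem_range, Finset.mem_Ico]
      have hkmem : k ∈ Finset.range n \ S := by
        simp only [Finset.mem_sdiff, Finset.mem_range, hmemS]
        omega
      rw [Finset.prod_eq_prod_diff_singleton_mul hkmem]
      have hn1mem : n - 1 ∈ (Finset.range n \ S) \ {k} := by
        simp only [Finset.mem_sdiff, Finset.mem_range, Finset.mem_singleton, hmemS]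
        omega
      rw [Finset.prod_eq_prod_diff_singleton_mul hn1mem]
      have hGk : G k = q - 1 := by
        simp only [hG]; split_ifs <;> omega
      have hGn1 : G (n - 1) = q - 1 := by
        simp only [hG]; split_ifs <;> omega
      rw [hGk, hGn1]
      have hcard2 : (((Finset.range n \ S) \ {k}) \ {n - 1}).card = b := by
        rw [Finset.sdiff_singleton_eq_erase, Finset.card_erase_of_mem hn1mem,
          Finset.sdiff_singleton_eq_erase, Finset.card_erase_of_mem hkmem,
          Finset.card_sdiff_of_subset hSsub, Finset.card_range, hcardS]
        omega
      have hprodle : (∏ i ∈ ((Finset.range n \ S) \ {k}) \ {n - 1}, G i) ≤ q ^ b := by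
        rw [← hcard2]
        apply Finset.prod_le_pow_card
        intro x _
        simp only [hG]; split_ifs <;> omega
      calc (∏ i ∈ ((Finset.range n \ S) \ {k}) \ {n - 1}, G i) * (q - 1) * (q - 1)
          ≤ q ^ b * (q - 1) * (q - 1) := by
            apply Nat.mul_le_mul_right
            apply Nat.mul_le_mul_right
            exact hprodle
        _ = (q - 1) ^ 2 * q ^ b := by ring
lemma ncard_biUnion_le {α ι : Type*} [Finite α] (s : Finset ι) (f : ι → Set α) :
    (⋃ i ∈ s, f i).ncard ≤ ∑ i ∈ s, (f i).ncard := by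
  classical
  induction s using Finset.induction_on with
  | empty => simp
  | insert a t hx ih =>
    rw [Finset.sum_insert hx, Finset.set_biUnion_insert]
    exact le_trans (Set.ncard_union_le _ _) (Nat.add_le_add_left ih _)

lemma cover {q k b n : ℕ} (hq : 2 ≤ q) (hk : 1 ≤ k) (hn : n = b + 2 * k + 2) :
    {w : Fin n → Fin q | ∀ i : Fin n, pDcond q n k i.val (w i)}
      ⊆ blkCode n q k ∪ ⋃ j ∈ Finset.Ico (k + 1) (n - k),
          {w : Fin n → Fin q | ∀ i : Fin n,
            pDcond q n k i.val (w i) ∧ (j ≤ i.val → i.val < j + k → (w i).val = 0)} := by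
  intro w hw
  simp only [Set.mem_setOf_eq] at hw
  by_cases hR : ∀ j : ℕ, k ≤ j → j + k ≤ n → ∃ i : Fin n, j ≤ i.val ∧ i.val < j + k ∧ ¬ (w i).val = 0
  · exact Or.inl ⟨hw, hR⟩
  · push_neg at hR
    obtain ⟨j, hjk, hjn, hz⟩ := hR
    have hz' : ∀ i : Fin n, j ≤ i.val → i.val < j + k → (w i).val = 0 := by
      intro i h1 h2
      by_contra hne
      exact hne (hz i h1 h2)
    have hjne : j ≠ k := by
      intro hjeq
      have h0 := hz' ⟨k, by omega⟩ (by simp [hjeq]) (by simp [hjeq]; omega)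
      exact (hw ⟨k, by omega⟩).2.1 rfl h0
    have hjtop : j + k ≤ n - 1 := by
      by_contra htop
      have hjn1 : j + k = n := by omega
      have h0 := hz' ⟨n - 1, by omega⟩ (by simp; omega) (by simp; omega)
      exact (hw ⟨n - 1, by omega⟩).2.2 rfl h0
    refine Or.inr (Set.mem_iUnion.mpr ⟨j, Set.mem_iUnion.mpr ⟨?_, ?_⟩⟩)
    · simp only [Finset.mem_Ico]
      omega
    · intro i
      exact ⟨hw i, fun h1 h2 => hz' i h1 h2⟩

lemma ncard_le_maxNOCode {q n : ℕ} (C : Set (Fin n → Fin q)) (hC : NonOverlappingCode C) :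
    C.ncard ≤ maxNOCode n q := by
  apply le_csSup
  · refine ⟨Nat.card (Fin n → Fin q), ?_⟩
    rintro m ⟨C', _, rfl⟩
    rw [← Set.ncard_univ]
    exact Set.ncard_le_ncard (Set.subset_univ C') Set.finite_univ
  · exact ⟨C, hC, rfl⟩

lemma key_lower {q k b n : ℕ} (hq : 2 ≤ q) (hk : 1 ≤ k) (hn : n = b + 2 * k + 2) :
    (q - 1) ^ 2 * q ^ (b + k) ≤ maxNOCode n q + (b + 1) * ((q - 1) ^ 2 * q ^ b) := by
  classical
  rw [← card_D (b := b) hq hk hn]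
  calc {w : Fin n → Fin q | ∀ i : Fin n, pDcond q n k i.val (w i)}.ncard
      ≤ (blkCode n q k ∪ ⋃ j ∈ Finset.Ico (k + 1) (n - k),
          {w : Fin n → Fin q | ∀ i : Fin n,
            pDcond q n k i.val (w i) ∧ (j ≤ i.val → i.val < j + k → (w i).val = 0)}).ncard :=
        Set.ncard_le_ncard (cover (b := b) hq hk hn) (Set.toFinite _)
    _ ≤ (blkCode n q k).ncard + (⋃ j ∈ Finset.Ico (k + 1) (n - k),
          {w : Fin n → Fin q | ∀ i : Fin n,
            pDcond q n k i.val (w i) ∧ (j ≤ i.val → i.val < j + k → (w i).val = 0)}).ncard :=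
        Set.ncard_union_le _ _
    _ ≤ maxNOCode n q + (b + 1) * ((q - 1) ^ 2 * q ^ b) := by
        apply Nat.add_le_add
        · exact ncard_le_maxNOCode _ (blk_nonOverlapping hk (by omega))
        · calc (⋃ j ∈ Finset.Ico (k + 1) (n - k),
              {w : Fin n → Fin q | ∀ i : Fin n,
                pDcond q n k i.val (w i) ∧ (j ≤ i.val → i.val < j + k → (w i).val = 0)}).ncard
              ≤ ∑ j ∈ Finset.Ico (k + 1) (n - k),
                  {w : Fin n → Fin q | ∀ i : Fin n,
                    pDcond q n k i.val (w i) ∧ (j ≤ i.val → i.val < j + k → (w i).val = 0)}.ncard :=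
                ncard_biUnion_le _ _
            _ ≤ ∑ _j ∈ Finset.Ico (k + 1) (n - k), (q - 1) ^ 2 * q ^ b := by
                apply Finset.sum_le_sum
                intro j hj
                simp only [Finset.mem_Ico] at hj
                exact card_Bad hq hk hn hj.1 (by omega)
            _ = (b + 1) * ((q - 1) ^ 2 * q ^ b) := by
                rw [Finset.sum_const, Nat.card_Ico, smul_eq_mul]
                congr 1
                omega
/-- Place codeword `w` at position `p` inside a word of length `2n-1`, filling the
remaining `n-1` positions with `r`. -/
def emb {n q : ℕ} (x : (Fin n → Fin q) × Fin n × (Fin (n - 1) → Fin q)) :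
    Fin (2 * n - 1) → Fin q :=
  fun i =>
    if h : x.2.1.val ≤ i.val ∧ i.val < x.2.1.val + n then
      x.1 ⟨i.val - x.2.1.val, by omega⟩
    else if h2 : i.val < x.2.1.val then
      x.2.2 ⟨i.val, by have := x.2.1.isLt; omega⟩
    else
      x.2.2 ⟨i.val - n, by have := x.2.1.isLt; have := i.isLt; omega⟩

lemma emb_agree_overlap {n q : ℕ} {C : Set (Fin n → Fin q)} (hC : NonOverlappingCode C)
    (w₁ w₂ : Fin n → Fin q) (h₁ : w₁ ∈ C) (h₂ : w₂ ∈ C) (p₁ p₂ : Fin n)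
    (r₁ r₂ : Fin (n - 1) → Fin q) (hlt : p₁.val < p₂.val)
    (heq : emb (w₁, p₁, r₁) = emb (w₂, p₂, r₂)) : False := by
  have hp1 := p₁.isLt
  have hp2 := p₂.isLt
  apply hC w₁ h₁ w₂ h₂
  refine ⟨p₁.val + n - p₂.val, by omega, by omega, Or.inr ?_⟩
  intro i hi
  have hidx : p₂.val + i < 2 * n - 1 := by omega
  have hstep := congrFun heq ⟨p₂.val + i, hidx⟩
  rw [emb, emb] at hstep
  simp only at hstep
  have c1 : p₁.val ≤ p₂.val + i ∧ p₂.val + i < p₁.val + n := by omega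
  have c2 : p₂.val ≤ p₂.val + i ∧ p₂.val + i < p₂.val + n := by omega
  simp only [dif_pos c1, dif_pos c2] at hstep
  have e₁ : (⟨p₂.val + i - p₁.val, by omega⟩ : Fin n)
      = ⟨n - (p₁.val + n - p₂.val) + i, by omega⟩ := by
    apply Fin.ext
    simp only
    omega
  have e₂ : (⟨p₂.val + i - p₂.val, by omega⟩ : Fin n) = ⟨i, by omega⟩ := by
    apply Fin.ext
    simp only
    omega
  rw [e₁, e₂] at hstep
  exact hstep.symm

lemma emb_injective {n q : ℕ} {C : Set (Fin n → Fin q)} (hC : NonOverlappingCode C) :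
    Function.Injective (fun x : ↥C × Fin n × (Fin (n - 1) → Fin q) =>
      emb ((x.1 : Fin n → Fin q), x.2.1, x.2.2)) := by
  rintro ⟨⟨w, hw⟩, p, r⟩ ⟨⟨w', hw'⟩, p', r'⟩ heq
  simp only at heq
  have hp := p.isLt
  have hp' := p'.isLt
  have hpp : p = p' := by
    rcases lt_trichotomy p.val p'.val with h | h | h
    · exact absurd (emb_agree_overlap hC w w' hw hw' p p' r r' h heq) (fun h => h)
    · exact Fin.ext h
    · exact absurd (emb_agree_overlap hC w' w hw' hw p' p r' r h heq.symm) (fun h => h)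
  subst hpp
  have hww : w = w' := by
    funext jj
    have hj := jj.isLt
    have hidx : p.val + jj.val < 2 * n - 1 := by omega
    have hstep := congrFun heq ⟨p.val + jj.val, hidx⟩
    rw [emb, emb] at hstep
    simp only at hstep
    have c1 : p.val ≤ p.val + jj.val ∧ p.val + jj.val < p.val + n := by omega
    simp only [dif_pos c1] at hstep
    have e : (⟨p.val + jj.val - p.val, by omega⟩ : Fin n) = jj := by
      apply Fin.ext
      simp only
      omega
    rw [e] at hstep
    exact hstep
  subst hww
  have hrr : r = r' := by
    funext jj
    have hj := jj.isLt
    rcases lt_or_ge jj.val p.val with h | h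
    · have hidx : jj.val < 2 * n - 1 := by omega
      have hstep := congrFun heq ⟨jj.val, hidx⟩
      rw [emb, emb] at hstep
      simp only at hstep
      have c1 : ¬ (p.val ≤ jj.val ∧ jj.val < p.val + n) := by omega
      have c2 : jj.val < p.val := h
      simp only [dif_neg c1, dif_pos c2] at hstep
      have e : (⟨jj.val, by omega⟩ : Fin (n - 1)) = jj := by
        apply Fin.ext
        simp only
      rw [e] at hstep
      exact hstep
    · have hidx : jj.val + n < 2 * n - 1 := by omega
      have hstep := congrFun heq ⟨jj.val + n, hidx⟩
      rw [emb, emb] at hstep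
      simp only at hstep
      have c1 : ¬ (p.val ≤ jj.val + n ∧ jj.val + n < p.val + n) := by omega
      have c2 : ¬ (jj.val + n < p.val) := by omega
      simp only [dif_neg c1, dif_neg c2] at hstep
      have e : (⟨jj.val + n - n, by omega⟩ : Fin (n - 1)) = jj := by
        apply Fin.ext
        simp only
        omega
      rw [e] at hstep
      exact hstep
  subst hrr
  rfl
lemma code_card_upper {q n : ℕ} (C : Set (Fin n → Fin q)) (hC : NonOverlappingCode C) :
    C.ncard * (n * q ^ (n - 1)) ≤ q ^ (2 * n - 1) := by
  classical
  have hinj := emb_injective hC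
  have hcard := Nat.card_le_card_of_injective _ hinj
  rw [Nat.card_prod, Nat.card_prod, Nat.card_coe_set_eq] at hcard
  simp only [Nat.card_eq_fintype_card, Fintype.card_fin, Fintype.card_fun] at hcard
  exact hcard

lemma maxNOCode_upper {q n : ℕ} (hq : 2 ≤ q) (hn : 1 ≤ n) :
    maxNOCode n q * (n * q ^ (n - 1)) ≤ q ^ (2 * n - 1) := by
  have hpos : 0 < n * q ^ (n - 1) := by positivity
  have hle : maxNOCode n q ≤ q ^ (2 * n - 1) / (n * q ^ (n - 1)) := by
    apply csSup_le
    · exact ⟨0, ∅, fun u hu => absurd hu (Set.notMem_empty u), by simp⟩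
    · rintro m ⟨C, hC, rfl⟩
      rw [Nat.le_div_iff_mul_le hpos]
      exact code_card_upper C hC
  calc maxNOCode n q * (n * q ^ (n - 1))
      ≤ (q ^ (2 * n - 1) / (n * q ^ (n - 1))) * (n * q ^ (n - 1)) :=
        Nat.mul_le_mul_right _ hle
    _ ≤ q ^ (2 * n - 1) := Nat.div_mul_le_self _ _

lemma pow_big : ∀ m : ℕ, 6 ≤ m → 4 * m + 2 ≤ 2 ^ (m - 1) := by
  intro m hm
  induction m with
  | zero => omega
  | succ l ih =>
    rcases Nat.lt_or_ge l 6 with h | h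
    · interval_cases l <;> simp_all <;> omega
    · have := ih (by omega)
      have he : l + 1 - 1 = (l - 1) + 1 := by omega
      rw [he, pow_succ]
      omega

lemma clog_choice {q n : ℕ} (hq : 2 ≤ q) (hn : 12 ≤ n) :
    ∃ k : ℕ, 1 ≤ k ∧ 2 * k + 2 ≤ n ∧ 2 * n ≤ q ^ k ∧ q ^ k ≤ q * (2 * n - 1) := by
  refine ⟨Nat.clog q (2 * n), Nat.clog_pos (by omega) (by omega), ?_, ?_, ?_⟩
  · by_contra hcon
    push_neg at hcon
    set k := Nat.clog q (2 * n) with hk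
    have hk1 : 1 ≤ k := Nat.clog_pos (by omega) (by omega)
    have hlow : q ^ (k - 1) < 2 * n := by
      have := Nat.pow_pred_clog_lt_self (b := q) (by omega) (x := 2 * n) (by omega)
      simpa [Nat.pred_eq_sub_one] using this
    have h2 : 2 ^ (k - 1) ≤ q ^ (k - 1) := Nat.pow_le_pow_left hq _
    rcases Nat.lt_or_ge k 6 with hsm | hbig
    · omega
    · have := pow_big k hbig
      omega
  · exact Nat.le_pow_clog (by omega) _
  · set k := Nat.clog q (2 * n) with hk
    have hk1 : 1 ≤ k := Nat.clog_pos (by omega) (by omega)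
    have hlow : q ^ (k - 1) < 2 * n := by
      have := Nat.pow_pred_clog_lt_self (b := q) (by omega) (x := 2 * n) (by omega)
      simpa [Nat.pred_eq_sub_one] using this
    calc q ^ k = q * q ^ (k - 1) := by
          rw [← pow_succ']
          congr 1
          omega
      _ ≤ q * (2 * n - 1) := Nat.mul_le_mul_left q (by omega)
set_option maxHeartbeats 1000000 in
/-- Lemma 2 of Blackburn, "Non-overlapping codes": for fixed `q ≥ 2`,
`liminf_{n→∞} C(n,q)/(q^n/n) ≥ (q-1)²(2q-1)/(4q⁴)`. -/
theorem stmt6 {q : ℕ} (hq : 2 ≤ q) :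
    (((q : ℝ) - 1) ^ 2 * (2 * (q : ℝ) - 1)) / (4 * (q : ℝ) ^ 4)
      ≤ Filter.liminf (fun n : ℕ => (maxNOCode n q : ℝ) / ((q : ℝ) ^ n / (n : ℝ)))
          Filter.atTop := by
  have hqR : (2 : ℝ) ≤ (q : ℝ) := by exact_mod_cast hq
  -- eventual upper bound (for coboundedness)
  have hub : ∀ᶠ n in Filter.atTop,
      (maxNOCode n q : ℝ) / ((q : ℝ) ^ n / (n : ℝ)) ≤ 1 := by
    filter_upwards [Filter.eventually_ge_atTop 1] with n hn
    have h := maxNOCode_upper (q := q) (n := n) hq hn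
    have hnR : (0 : ℝ) < (n : ℝ) := by exact_mod_cast hn
    have hcast : (maxNOCode n q : ℝ) * ((n : ℝ) * (q : ℝ) ^ (n - 1)) ≤ (q : ℝ) ^ (2 * n - 1) := by
      exact_mod_cast h
    have hsplit : (q : ℝ) ^ (2 * n - 1) = (q : ℝ) ^ n * (q : ℝ) ^ (n - 1) := by
      rw [← pow_add]
      congr 1
      omega
    have hq1 : (0 : ℝ) < (q : ℝ) ^ (n - 1) := by positivity
    have hMn : (maxNOCode n q : ℝ) * (n : ℝ) ≤ (q : ℝ) ^ n := by
      have h2 : ((maxNOCode n q : ℝ) * (n : ℝ)) * (q : ℝ) ^ (n - 1)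
          ≤ (q : ℝ) ^ n * (q : ℝ) ^ (n - 1) := by
        rw [hsplit] at hcast
        linarith [hcast]
      exact le_of_mul_le_mul_right h2 hq1
    rw [div_le_one (by positivity), le_div_iff₀ hnR]
    exact hMn
  -- eventual lower bound
  have hlb : ∀ᶠ n in Filter.atTop,
      (((q : ℝ) - 1) ^ 2 * (2 * (q : ℝ) - 1)) / (4 * (q : ℝ) ^ 4)
        ≤ (maxNOCode n q : ℝ) / ((q : ℝ) ^ n / (n : ℝ)) := by
    filter_upwards [Filter.eventually_ge_atTop 12] with n hn
    obtain ⟨k, hk1, hkn, hpow1, hpow2⟩ := clog_choice hq hn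
    have hnb : n = (n - 2 * k - 2) + 2 * k + 2 := by omega
    obtain ⟨b, hb⟩ : ∃ b, n = b + 2 * k + 2 := ⟨n - 2 * k - 2, hnb⟩
    have hkey := key_lower (q := q) (k := k) (b := b) hq hk1 hb
    have hq1 : 1 ≤ q := by omega
    have hkeyR : ((q : ℝ) - 1) ^ 2 * (q : ℝ) ^ (b + k)
        ≤ (maxNOCode n q : ℝ) + ((b : ℝ) + 1) * (((q : ℝ) - 1) ^ 2 * (q : ℝ) ^ b) := by
      have := hkey
      push_cast [Nat.cast_sub hq1] at this ⊢
      exact_mod_cast this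
    set Q : ℝ := (q : ℝ) with hQ
    set X : ℝ := Q ^ k with hX
    set P : ℝ := Q ^ b with hP
    set N : ℝ := (n : ℝ) with hN
    set M : ℝ := (maxNOCode n q : ℝ) with hM
    have hXn : 2 * N ≤ X := by
      rw [hX, hN, hQ]
      exact_mod_cast hpow1
    have hX2 : X ≤ 2 * N * Q := by
      have h1 : X ≤ Q * (2 * N - 1) := by
        rw [hX, hN, hQ]
        have : ((q * (2 * n - 1) : ℕ) : ℝ) = (q : ℝ) * (2 * (n : ℝ) - 1) := by
          push_cast [Nat.cast_sub (show 1 ≤ 2 * n by omega)]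
          ring
        rw [← this]
        exact_mod_cast hpow2
      linarith [h1, hqR]
    have hBN : (b : ℝ) + 1 ≤ N := by
      rw [hN]
      have : b + 1 ≤ n := by omega
      exact_mod_cast this
    have hNpos : (0 : ℝ) < N := by rw [hN]; exact_mod_cast (by omega : 0 < n)
    have hPpos : (0 : ℝ) < P := by rw [hP, hQ]; positivity
    have hMlow : (Q - 1) ^ 2 * P * (X - N) ≤ M := by
      have hpw : Q ^ (b + k) = P * X := by rw [hP, hX, pow_add]
      rw [hpw] at hkeyR
      have hnn : (0 : ℝ) ≤ (Q - 1) ^ 2 * P := by positivity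
      nlinarith [mul_le_mul_of_nonneg_left hBN hnn, hkeyR]
    have hQn : Q ^ n = P * X ^ 2 * Q ^ 2 := by
      rw [hP, hX, hb, pow_add, pow_add, pow_mul']
    have hscalar : (2 * Q - 1) * X ^ 2 ≤ 4 * Q ^ 2 * N * (X - N) := by
      have ha : (2 * Q - 1) * (2 * N) ≤ (2 * Q - 1) * X :=
        mul_le_mul_of_nonneg_left hXn (by linarith)
      have hNQ : 0 ≤ N * (Q - 1) := mul_nonneg (le_of_lt hNpos) (by linarith)
      have hf2 : 0 ≤ (2 * Q - 1) * X - 2 * N * Q := by nlinarith [ha, hNQ]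
      have hprod : 0 ≤ (2 * N * Q - X) * ((2 * Q - 1) * X - 2 * N * Q) :=
        mul_nonneg (by linarith) hf2
      nlinarith [hprod]
    rw [div_div_eq_mul_div, le_div_iff₀ (by positivity : (0 : ℝ) < Q ^ n)]
    have hMN : (Q - 1) ^ 2 * P * (X - N) * N ≤ M * N :=
      mul_le_mul_of_nonneg_right hMlow (le_of_lt hNpos)
    have hfinal : (Q - 1) ^ 2 * (2 * Q - 1) / (4 * Q ^ 4) * Q ^ n
        ≤ (Q - 1) ^ 2 * P * (X - N) * N := by
      rw [hQn, div_mul_eq_mul_div, div_le_iff₀ (by positivity : (0 : ℝ) < 4 * Q ^ 4)]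
      have hmul := mul_le_mul_of_nonneg_left hscalar
        (show (0 : ℝ) ≤ (Q - 1) ^ 2 * P * Q ^ 2 by positivity)
      linarith [hmul]
    linarith [hfinal, hMN]
  exact Filter.le_liminf_of_le (Filter.isCoboundedUnder_ge_of_eventually_le _ hub) hlb
end

section
/- Let n ≥ 2 and q ≥ 2 be integers, and let k and ℓ be integers with 1 ≤ k ≤ n−1 and 1 ≤ ℓ ≤ q−1. Let F be an alphabet of size q partitioned as F = I ∪ J with |I| = ℓ and |J| = q−ℓ, and let S ⊆ I^k ⊆ F^k. Let C be the set of all words c ∈ F^n such that: c_1 c_2 ⋯ c_k ∈ S; c_{k+1} ∈ J and c_n ∈ J; and the word c_{k+2} c_{k+3} ⋯ c_{n−1} is S-free. Then C is a non-overlapping code. -/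
/-- A word `x ∈ F^r` is `S`-free (for `S ⊆ F^k`) if no length-`k` (contiguous)
subword of `x` lies in `S`. If `r < k` this holds vacuously. -/
def SFree {F : Type*} {k : ℕ} (S : Set (Fin k → F)) {r : ℕ} (x : Fin r → F) : Prop :=
  ∀ i : ℕ, ∀ _hik : i + k ≤ r,
    (fun j : Fin k => x ⟨i + (j : ℕ), by have := j.isLt; omega⟩) ∉ S

lemma aux7 {F : Type*} {n k : ℕ} (hn : 2 ≤ n) (hk1 : 1 ≤ k) (hk2 : k ≤ n - 1)
    (I J : Set F) (hdisj : Disjoint I J)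
    (S : Set (Fin k → F)) (hS : ∀ s ∈ S, ∀ i, s i ∈ I)
    (u v : Fin n → F)
    (hu1 : (fun i : Fin k => u ⟨(i : ℕ), by have := i.isLt; omega⟩) ∈ S)
    (hv2 : v ⟨k, by omega⟩ ∈ J) (hv3 : v ⟨n - 1, by omega⟩ ∈ J)
    (hv4 : SFree S (fun j : Fin (n - k - 2) => v ⟨k + 1 + (j : ℕ), by have := j.isLt; omega⟩))
    (m : ℕ) (hm1 : 0 < m) (hm2 : m < n)
    (hov : ∀ i : ℕ, ∀ hi : i < m, u ⟨i, by omega⟩ = v ⟨n - m + i, by omega⟩) : False := by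
  rcases le_or_gt m k with hmk | hmk
  · have h := hov (m - 1) (by omega)
    have hI' : u ⟨m - 1, by omega⟩ ∈ I := hS _ hu1 ⟨m - 1, by omega⟩
    have h2 : u ⟨m - 1, by omega⟩ ∈ J := by
      rw [h, show (⟨n - m + (m - 1), by omega⟩ : Fin n) = ⟨n - 1, by omega⟩ from
        Fin.mk_eq_mk.mpr (by omega)]
      exact hv3
    exact Set.disjoint_left.mp hdisj hI' h2
  · rcases le_or_gt (n - m) k with hpk | hpk
    · have h := hov (k - (n - m)) (by omega)
      have hI' : u ⟨k - (n - m), by omega⟩ ∈ I := hS _ hu1 ⟨k - (n - m), by omega⟩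
      have h2 : v ⟨k, by omega⟩ ∈ I := by
        rw [show (⟨k, by omega⟩ : Fin n) = ⟨n - m + (k - (n - m)), by omega⟩ from
          Fin.mk_eq_mk.mpr (by omega), ← h]
        exact hI'
      exact Set.disjoint_left.mp hdisj h2 hv2
    · apply hv4 (n - m - (k + 1)) (by omega)
      have key : (fun j : Fin k =>
          (fun j' : Fin (n - k - 2) => v ⟨k + 1 + (j' : ℕ), by have := j'.isLt; omega⟩)
            ⟨n - m - (k + 1) + (j : ℕ), by have := j.isLt; omega⟩)
          = (fun i : Fin k => u ⟨(i : ℕ), by have := i.isLt; omega⟩) := by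
        funext j
        show v ⟨k + 1 + (n - m - (k + 1) + (j : ℕ)), by have := j.isLt; omega⟩ = _
        rw [hov (j : ℕ) (by have := j.isLt; omega)]
        exact congrArg v (Fin.mk_eq_mk.mpr (by have := j.isLt; omega))
      rw [key]
      exact hu1

/-- Construction 2 of Blackburn, "Non-overlapping codes": given a partition `F = I ∪ J`
with `|I| = ℓ`, `|J| = q - ℓ`, and `S ⊆ I^k`, the set of words `c ∈ F^n` with
`c_1 ⋯ c_k ∈ S`, `c_{k+1} ∈ J`, `c_n ∈ J`, and `c_{k+2} ⋯ c_{n-1}` `S`-free,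
is a non-overlapping code. -/
theorem stmt7 {F : Type*} [Fintype F] {n q k ℓ : ℕ} (hn : 2 ≤ n) (hq : 2 ≤ q)
    (hF : Fintype.card F = q) (hk1 : 1 ≤ k) (hk2 : k ≤ n - 1) (hl1 : 1 ≤ ℓ)
    (hl2 : ℓ ≤ q - 1) (I J : Set F) (hIJ : I ∪ J = Set.univ) (hdisj : Disjoint I J)
    (hI : I.ncard = ℓ) (hJ : J.ncard = q - ℓ)
    (S : Set (Fin k → F)) (hS : ∀ s ∈ S, ∀ i, s i ∈ I) :
    NonOverlappingCode {c : Fin n → F |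
      (fun i : Fin k => c ⟨(i : ℕ), by have := i.isLt; omega⟩) ∈ S ∧
      c ⟨k, by omega⟩ ∈ J ∧ c ⟨n - 1, by omega⟩ ∈ J ∧
      SFree S (fun j : Fin (n - k - 2) => c ⟨k + 1 + (j : ℕ), by have := j.isLt; omega⟩)} := by
  rintro u ⟨hu1, hu2, hu3, hu4⟩ v ⟨hv1, hv2, hv3, hv4⟩ ⟨m, hm1, hm2, hcase | hcase⟩
  · exact aux7 hn hk1 hk2 I J hdisj S hS u v hu1 hv2 hv3 hv4 m hm1 hm2 hcase
  · exact aux7 hn hk1 hk2 I J hdisj S hS v u hv1 hu2 hu3 hu4 m hm1 hm2 hcase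
end

section
/- Let n ≥ 2 and q ≥ 2 be integers, and let ℓ be an integer with 1 ≤ ℓ ≤ q−1. Let F be an alphabet of size q and let I ⊆ F with |I| = ℓ. Then the set C of all words c ∈ F^n whose first n−1 letters lie in I and whose last letter lies in F∖I is a non-overlapping code with |C| = ℓ^{n−1}·(q−ℓ); consequently C(n,q) ≥ ℓ^{n−1}·(q−ℓ). -/
/-- The special case `k = n - 1`, `S = I^{n-1}` of Construction 2 of Blackburn,
"Non-overlapping codes": the set of words whose first `n-1` letters lie in `I` and whose
last letter lies outside `I` is a non-overlapping code of size `ℓ^{n-1}(q - ℓ)`;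
consequently `C(n,q) ≥ ℓ^{n-1}(q - ℓ)`. -/
theorem stmt9 {F : Type*} [Fintype F] {n q ℓ : ℕ} (hn : 2 ≤ n) (hq : 2 ≤ q)
    (hF : Fintype.card F = q) (hl1 : 1 ≤ ℓ) (hl2 : ℓ ≤ q - 1)
    (I : Set F) (hI : I.ncard = ℓ) :
    NonOverlappingCode {c : Fin n → F |
        (∀ i : Fin n, (i : ℕ) < n - 1 → c i ∈ I) ∧ c ⟨n - 1, by omega⟩ ∉ I} ∧
    {c : Fin n → F |
        (∀ i : Fin n, (i : ℕ) < n - 1 → c i ∈ I) ∧ c ⟨n - 1, by omega⟩ ∉ I}.ncard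
      = ℓ ^ (n - 1) * (q - ℓ) ∧
    ℓ ^ (n - 1) * (q - ℓ) ≤ maxNOCode n q := by
  have hn1 : n - 1 < n := by omega
  set S : Set (Fin n → F) := {c : Fin n → F |
      (∀ i : Fin n, (i : ℕ) < n - 1 → c i ∈ I) ∧ c ⟨n - 1, by omega⟩ ∉ I} with hSdef
  -- Part 1: non-overlapping
  have hNO : NonOverlappingCode S := by
    rintro u ⟨hu1, hu2⟩ v ⟨hv1, hv2⟩ ⟨m, hm0, hmn, hcase⟩
    have key : ∀ (a b : Fin n → F),
        (∀ i : Fin n, (i : ℕ) < n - 1 → a i ∈ I) → b ⟨n - 1, hn1⟩ ∉ I →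
        (∀ i : ℕ, ∀ hi : i < m, a ⟨i, hi.trans hmn⟩ = b ⟨n - m + i, by omega⟩) → False := by
      intro a b ha hb h
      have h1 := h (m - 1) (by omega)
      have heq : (⟨n - m + (m - 1), by omega⟩ : Fin n) = ⟨n - 1, hn1⟩ := by
        apply Fin.ext; simp; omega
      rw [heq] at h1
      exact hb (h1 ▸ ha ⟨m - 1, by omega⟩ (by simp; omega))
    rcases hcase with h | h
    · exact key u v hu1 hv2 h
    · exact key v u hv1 hu2 h
  -- Part 2: cardinality
  have hcompl : (Iᶜ : Set F).ncard = q - ℓ := by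
    have := Set.ncard_add_ncard_compl I
    rw [hI, Nat.card_eq_fintype_card, hF] at this
    omega
  have eS : S ≃ (Fin (n - 1) → I) × ↥(Iᶜ) :=
    { toFun := fun c =>
        (fun i => ⟨c.1 ⟨i, by omega⟩, c.2.1 ⟨i, by omega⟩ (by simpa using i.2)⟩,
         ⟨c.1 ⟨n - 1, hn1⟩, c.2.2⟩)
      invFun := fun p =>
        ⟨fun i => if h : (i : ℕ) < n - 1 then (p.1 ⟨i, h⟩ : F) else (p.2 : F), by
          constructor
          · intro i hi
            simp only [hi, dif_pos]
            exact (p.1 ⟨i, hi⟩).2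
          · dsimp only
            rw [dif_neg (lt_irrefl _)]
            exact p.2.2⟩
      left_inv := fun c => by
        apply Subtype.ext
        funext i
        show (if h : (i : ℕ) < n - 1 then c.1 ⟨(i : ℕ), by omega⟩ else c.1 ⟨n - 1, hn1⟩) = c.1 i
        have hi := i.isLt
        by_cases h : (i : ℕ) < n - 1
        · rw [dif_pos h]
        · rw [dif_neg h]
          have heq : (⟨n - 1, hn1⟩ : Fin n) = i := Fin.ext (show n - 1 = (i : ℕ) by omega)
          rw [heq]
      right_inv := fun p => by
        apply Prod.ext
        · funext i
          apply Subtype.ext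
          show (if h : ((⟨(i : ℕ), by omega⟩ : Fin n) : ℕ) < n - 1
              then (p.1 ⟨((⟨(i : ℕ), by omega⟩ : Fin n) : ℕ), h⟩ : F) else (p.2 : F)) = p.1 i
          rw [dif_pos (show ((⟨(i : ℕ), by omega⟩ : Fin n) : ℕ) < n - 1 from i.2)]
        · apply Subtype.ext
          show (if h : ((⟨n - 1, hn1⟩ : Fin n) : ℕ) < n - 1
              then (p.1 ⟨((⟨n - 1, hn1⟩ : Fin n) : ℕ), h⟩ : F) else (p.2 : F)) = (p.2 : F)
          rw [dif_neg (lt_irrefl _)] }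
  have hcard : S.ncard = ℓ ^ (n - 1) * (q - ℓ) := by
    rw [← Nat.card_coe_set_eq, Nat.card_congr eS, Nat.card_prod, Nat.card_fun,
      Nat.card_coe_set_eq, Nat.card_coe_set_eq, hI, hcompl,
      Nat.card_eq_fintype_card, Fintype.card_fin]
  refine ⟨hNO, hcard, ?_⟩
  -- Part 3: lower bound on maxNOCode
  have e : F ≃ Fin q := Fintype.equivFinOfCardEq hF
  set C' : Set (Fin n → Fin q) := (fun c => e ∘ c) '' S with hC'def
  have hinj : Function.Injective (fun c : Fin n → F => e ∘ c) := fun a b hab =>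
    funext fun i => e.injective (congrFun hab i)
  have hC'card : C'.ncard = ℓ ^ (n - 1) * (q - ℓ) := by
    rw [hC'def, Set.ncard_image_of_injective _ hinj, hcard]
  have hC'NO : NonOverlappingCode C' := by
    rintro _ ⟨u, hu, rfl⟩ _ ⟨v, hv, rfl⟩ ⟨m, hm0, hmn, hc⟩
    refine hNO u hu v hv ⟨m, hm0, hmn, ?_⟩
    rcases hc with h | h
    · exact Or.inl fun i hi => e.injective (h i hi)
    · exact Or.inr fun i hi => e.injective (h i hi)
  have hbdd : BddAbove {m | ∃ C : Set (Fin n → Fin q), NonOverlappingCode C ∧ C.ncard = m} := by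
    refine ⟨q ^ n, ?_⟩
    rintro m ⟨C, _, rfl⟩
    calc C.ncard ≤ (Set.univ : Set (Fin n → Fin q)).ncard :=
          Set.ncard_le_ncard (Set.subset_univ _) Set.finite_univ
      _ = q ^ n := by simp [Set.ncard_univ, Nat.card_eq_fintype_card]
  have hmem : ℓ ^ (n - 1) * (q - ℓ) ∈
      {m | ∃ C : Set (Fin n → Fin q), NonOverlappingCode C ∧ C.ncard = m} :=
    ⟨C', hC'NO, hC'card⟩
  exact le_csSup hbdd hmem
end

section
/- Let n ≥ 2 be a fixed integer. Then liminf_{q→∞} C(n,q)/(q^n/n) ≥ ((n−1)/n)^{n−1}, where the liminf is taken over integers q tending to infinity. -/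
open Filter Topology

lemma card_lt_subtype (q k : ℕ) (hk : k ≤ q) :
    Fintype.card {x : Fin q // x.val < k} = k := by
  have e : {x : Fin q // x.val < k} ≃ Fin k :=
    { toFun := fun x => ⟨x.1.val, x.2⟩
      invFun := fun i => ⟨⟨i.val, i.2.trans_le hk⟩, i.2⟩
      left_inv := fun x => rfl
      right_inv := fun i => rfl }
  rw [Fintype.card_congr e, Fintype.card_fin]

lemma card_ge_subtype (q k : ℕ) :
    Fintype.card {x : Fin q // k ≤ x.val} = q - k := by
  have e : {x : Fin q // k ≤ x.val} ≃ Fin (q - k) :=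
    { toFun := fun x => ⟨x.1.val - k, by have := x.1.isLt; have := x.2; omega⟩
      invFun := fun j => ⟨⟨k + j.val, by have := j.isLt; omega⟩, Nat.le_add_right k j.val⟩
      left_inv := fun x => by
        apply Subtype.ext
        apply Fin.ext
        show k + (x.1.val - k) = x.1.val
        have := x.2
        omega
      right_inv := fun j => by
        apply Fin.ext
        show k + j.val - k = j.val
        omega }
  rw [Fintype.card_congr e, Fintype.card_fin]

lemma maxNOCode_ncard_le (n q : ℕ) (D : Set (Fin n → Fin q)) : D.ncard ≤ q ^ n := by
  calc D.ncard ≤ (Set.univ : Set (Fin n → Fin q)).ncard :=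
        Set.ncard_le_ncard (Set.subset_univ D) Set.finite_univ
    _ = q ^ n := by
        rw [Set.ncard_univ, Nat.card_eq_fintype_card, Fintype.card_fun,
          Fintype.card_fin, Fintype.card_fin]

lemma maxNOCode_bddAbove (n q : ℕ) :
    BddAbove {m | ∃ C : Set (Fin n → Fin q), NonOverlappingCode C ∧ C.ncard = m} := by
  refine ⟨q ^ n, ?_⟩
  rintro m ⟨D, -, rfl⟩
  exact maxNOCode_ncard_le n q D

lemma maxNOCode_ub (n q : ℕ) : maxNOCode n q ≤ q ^ n := by
  unfold maxNOCode
  apply csSup_le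
  · exact ⟨0, ∅, fun u hu => absurd hu (Set.notMem_empty u), by simp⟩
  · rintro m ⟨D, -, rfl⟩
    exact maxNOCode_ncard_le n q D

lemma maxNOCode_lb {n : ℕ} (hn : 2 ≤ n) (q k : ℕ) (hk : k ≤ q) :
    k * (q - k) ^ (n - 1) ≤ maxNOCode n q := by
  classical
  have hn0 : 0 < n := by omega
  set P : Fin n → Fin q → Prop := fun i x => if i.val = 0 then x.val < k else k ≤ x.val
    with hP
  set C : Set (Fin n → Fin q) := {w | ∀ i, P i (w i)} with hC
  have hmem0 : ∀ w ∈ C, (w ⟨0, hn0⟩).val < k := by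
    intro w hw
    have h := hw ⟨0, hn0⟩
    simpa [hP] using h
  have hmem1 : ∀ w ∈ C, ∀ (j : ℕ) (hj : j < n), j ≠ 0 → k ≤ (w ⟨j, hj⟩).val := by
    intro w hw j hj hj0
    have h := hw ⟨j, hj⟩
    simpa [hP, hj0] using h
  have hno : NonOverlappingCode C := by
    intro u hu v hv hov
    unfold Overlapping at hov
    obtain ⟨m, h1, h2, hcase⟩ := hov
    rcases hcase with h | h
    · have hnm : n - m < n := by omega
      have e' : u ⟨0, hn0⟩ = v ⟨n - m, hnm⟩ := h 0 h1
      have h0u := hmem0 u hu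
      have hkv := hmem1 v hv (n - m) hnm (by omega)
      rw [e'] at h0u
      omega
    · have hnm : n - m < n := by omega
      have e' : v ⟨0, hn0⟩ = u ⟨n - m, hnm⟩ := h 0 h1
      have h0v := hmem0 v hv
      have hku := hmem1 u hu (n - m) hnm (by omega)
      rw [e'] at h0v
      omega
  have hcard : C.ncard = k * (q - k) ^ (n - 1) := by
    rw [← Nat.card_coe_set_eq]
    have e1 : ↥C ≃ (∀ i : Fin n, {x : Fin q // P i x}) := Equiv.subtypePiEquivPi
    rw [Nat.card_congr e1, Nat.card_pi]
    obtain ⟨m, rfl⟩ : ∃ m, n = m + 1 := ⟨n - 1, by omega⟩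
    rw [Fin.prod_univ_succ]
    have h0 : Nat.card {x : Fin q // P 0 x} = k := by
      simp only [hP, Nat.card_eq_fintype_card, Fin.val_zero, if_pos rfl]
      exact card_lt_subtype q k hk
    have hsucc : ∀ i : Fin m, Nat.card {x : Fin q // P i.succ x} = q - k := by
      intro i
      simp only [hP, Nat.card_eq_fintype_card, Fin.val_succ,
        if_neg (Nat.succ_ne_zero i.val)]
      exact card_ge_subtype q k
    rw [h0, Finset.prod_congr rfl fun i _ => hsucc i, Finset.prod_const,
      Finset.card_univ, Fintype.card_fin]
    simp
  unfold maxNOCode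
  exact le_csSup (maxNOCode_bddAbove n q) ⟨C, hno, hcard⟩

/-- Theorem 3 of Blackburn, "Non-overlapping codes": for fixed `n ≥ 2`,
`liminf_{q→∞} C(n,q)/(q^n/n) ≥ ((n-1)/n)^{n-1}`. -/
theorem stmt10 {n : ℕ} (hn : 2 ≤ n) :
    (((n : ℝ) - 1) / (n : ℝ)) ^ (n - 1)
      ≤ Filter.liminf (fun q : ℕ => (maxNOCode n q : ℝ) / ((q : ℝ) ^ n / (n : ℝ)))
          Filter.atTop := by
  have hn0 : 0 < n := by omega
  have hnR : (0 : ℝ) < n := by exact_mod_cast hn0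
  have hkq : ∀ q : ℕ, q / n ≤ q := fun q => Nat.div_le_self q n
  -- T1 : (q/n)/q → 1/n
  have T1 : Tendsto (fun q : ℕ => ((q / n : ℕ) : ℝ) / q) atTop (𝓝 (1 / (n : ℝ))) := by
    apply tendsto_of_tendsto_of_tendsto_of_le_of_le'
      (g := fun q : ℕ => 1 / (n : ℝ) - 1 / q) (h := fun _ : ℕ => 1 / (n : ℝ))
    · simpa using (tendsto_const_nhds (x := 1 / (n:ℝ))).sub tendsto_one_div_atTop_nhds_zero_nat
    · exact tendsto_const_nhds
    · filter_upwards [eventually_ge_atTop 1] with q hq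
      have hq' : (0 : ℝ) < q := by exact_mod_cast hq
      have keyN : q ≤ (q / n + 1) * n := by
        have h1 := Nat.div_add_mod q n
        have h2 := Nat.mod_lt q hn0
        nlinarith
      have key : (q : ℝ) ≤ ((q / n : ℕ) + 1) * n := by exact_mod_cast keyN
      rw [sub_le_iff_le_add, ← add_div, div_le_div_iff₀ hnR hq']
      nlinarith
    · filter_upwards [eventually_ge_atTop 1] with q hq
      have hq' : (0 : ℝ) < q := by exact_mod_cast hq
      have h1 : ((q / n : ℕ) : ℝ) ≤ (q : ℝ) / n := Nat.cast_div_le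
      calc ((q / n : ℕ) : ℝ) / q ≤ ((q : ℝ) / n) / q := by gcongr
        _ = 1 / (n : ℝ) := by
            rw [div_div, mul_comm, ← div_div, div_self hq'.ne']
  -- T2 : (q - q/n)/q → (n-1)/n
  have T2 : Tendsto (fun q : ℕ => ((q - q / n : ℕ) : ℝ) / q) atTop
      (𝓝 (((n : ℝ) - 1) / n)) := by
    have h1 : Tendsto (fun q : ℕ => 1 - ((q / n : ℕ) : ℝ) / q) atTop
        (𝓝 (1 - 1 / (n : ℝ))) := tendsto_const_nhds.sub T1
    have he : (fun q : ℕ => 1 - ((q / n : ℕ) : ℝ) / q)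
        =ᶠ[atTop] (fun q : ℕ => ((q - q / n : ℕ) : ℝ) / q) := by
      filter_upwards [eventually_ge_atTop 1] with q hq
      have hq' : (0 : ℝ) < q := by exact_mod_cast hq
      have hc : ((q - q / n : ℕ) : ℝ) = (q : ℝ) - ((q / n : ℕ) : ℝ) := by
        have := hkq q
        push_cast [this]
        ring
      rw [hc, sub_div, div_self hq'.ne']
    have hval : ((n : ℝ) - 1) / n = 1 - 1 / (n : ℝ) := by
      field_simp
    rw [hval]
    exact h1.congr' he
  -- T3 : lower → ((n-1)/n)^(n-1)
  set lower : ℕ → ℝ := fun q : ℕ =>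
    ((q / n * (q - q / n) ^ (n - 1) : ℕ) : ℝ) / ((q : ℝ) ^ n / n) with hlower
  have Tmain : Tendsto (fun q : ℕ =>
      (n : ℝ) * (((q / n : ℕ) : ℝ) / q) * (((q - q / n : ℕ) : ℝ) / q) ^ (n - 1)) atTop
      (𝓝 ((n : ℝ) * (1 / (n : ℝ)) * (((n : ℝ) - 1) / n) ^ (n - 1))) :=
    (tendsto_const_nhds.mul T1).mul (T2.pow (n - 1))
  have he3 : (fun q : ℕ =>
      (n : ℝ) * (((q / n : ℕ) : ℝ) / q) * (((q - q / n : ℕ) : ℝ) / q) ^ (n - 1))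
      =ᶠ[atTop] lower := by
    filter_upwards [eventually_ge_atTop 1] with q hq
    have hq' : (0 : ℝ) < q := by exact_mod_cast hq
    have hpow : (q : ℝ) ^ n = (q : ℝ) ^ (n - 1) * q := by
      rw [← pow_succ]
      congr 1
      omega
    simp only [hlower]
    rw [hpow]
    push_cast
    rw [div_pow]
    field_simp
  have hlimval : (n : ℝ) * (1 / (n : ℝ)) * (((n : ℝ) - 1) / n) ^ (n - 1)
      = (((n : ℝ) - 1) / n) ^ (n - 1) := by
    rw [mul_one_div, div_self hnR.ne', one_mul]
  have T3 : Tendsto lower atTop (𝓝 ((((n : ℝ) - 1) / n) ^ (n - 1))) := by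
    rw [← hlimval]
    exact Tmain.congr' he3
  have hlow : Filter.liminf lower atTop = (((n : ℝ) - 1) / n) ^ (n - 1) := T3.liminf_eq
  rw [← hlow]
  apply Filter.liminf_le_liminf
  · -- lower q ≤ actual q eventually
    filter_upwards [eventually_ge_atTop 1] with q hq
    have hq' : (0 : ℝ) < q := by exact_mod_cast hq
    have hd : (0 : ℝ) < (q : ℝ) ^ n / n := by
      apply div_pos (by positivity) hnR
    have hM : ((q / n * (q - q / n) ^ (n - 1) : ℕ) : ℝ) ≤ (maxNOCode n q : ℝ) := by
      exact_mod_cast maxNOCode_lb hn q (q / n) (hkq q)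
    exact (div_le_div_iff_of_pos_right hd).mpr hM
  · exact T3.isBoundedUnder_ge
  · apply Filter.IsBoundedUnder.isCoboundedUnder_ge
    apply Filter.isBoundedUnder_of
    refine ⟨(n : ℝ), fun q => ?_⟩
    rcases Nat.eq_zero_or_pos q with rfl | hq
    · simp [hn0.ne', zero_pow, hnR.le]
    · have hq' : (0 : ℝ) < q := by exact_mod_cast hq
      have hd : (0 : ℝ) < (q : ℝ) ^ n / n := by
        apply div_pos (by positivity) hnR
      have hM : (maxNOCode n q : ℝ) ≤ (q : ℝ) ^ n := by
        have := maxNOCode_ub n q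
        calc (maxNOCode n q : ℝ) ≤ ((q ^ n : ℕ) : ℝ) := by exact_mod_cast this
          _ = (q : ℝ) ^ n := by push_cast; ring
      calc (maxNOCode n q : ℝ) / ((q : ℝ) ^ n / n)
          ≤ (q : ℝ) ^ n / ((q : ℝ) ^ n / n) := (div_le_div_iff_of_pos_right hd).mpr hM
        _ = n := by field_simp
end

section
/- Let q ≥ 2 be an integer. Then C(2,q) = ⌊q/2⌋·⌈q/2⌉; that is, a largest q-ary non-overlapping code of length 2 has exactly ⌊q/2⌋·⌈q/2⌉ codewords. -/
lemma quarter (m s k : ℕ) (h : 4 * m ≤ 4 * s + 4 * k + 1) : m ≤ s + k := by omega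

lemma ab_le (a b q : ℕ) (h : a + b ≤ q) : a * b ≤ (q / 2) * ((q + 1) / 2) := by
  rcases Nat.even_or_odd q with ⟨k, hk⟩ | ⟨k, hk⟩
  · have e1 : q / 2 = k := by omega
    have e2 : (q + 1) / 2 = k := by omega
    rw [e1, e2]
    have h' : (a : ℤ) + b ≤ 2 * k := by exact_mod_cast by omega
    have : (a : ℤ) * b ≤ (k : ℤ) * k := by
      nlinarith [sq_nonneg ((a : ℤ) - b), sq_nonneg ((a : ℤ) + b),
        (by positivity : (0:ℤ) ≤ (a:ℤ) + b)]
    exact_mod_cast this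
  · have e1 : q / 2 = k := by omega
    have e2 : (q + 1) / 2 = k + 1 := by omega
    rw [e1, e2]
    have h' : (a : ℤ) + b ≤ 2 * k + 1 := by exact_mod_cast by omega
    have h4 : 4 * ((a : ℤ) * b) ≤ 4 * ((k : ℤ) * k) + 4 * k + 1 := by
      nlinarith [sq_nonneg ((a : ℤ) - b), (by positivity : (0:ℤ) ≤ (a:ℤ) + b)]
    have h4' : 4 * (a * b) ≤ 4 * (k * k) + 4 * k + 1 := by exact_mod_cast h4
    calc a * b ≤ k * k + k := quarter _ _ _ h4'
      _ = k * (k + 1) := by ring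

/-- Theorem 4 of Blackburn, "Non-overlapping codes": `C(2,q) = ⌊q/2⌋ ⋅ ⌈q/2⌉`. -/
theorem stmt12 {q : ℕ} (hq : 2 ≤ q) :
    maxNOCode 2 q = (q / 2) * ((q + 1) / 2) := by
  set M := (q / 2) * ((q + 1) / 2) with hM
  -- Upper bound: every non-overlapping code has at most M codewords
  have upper : ∀ m ∈ {m | ∃ C : Set (Fin 2 → Fin q), NonOverlappingCode C ∧ C.ncard = m},
      m ≤ M := by
    rintro m ⟨C, hC, rfl⟩
    set A : Set (Fin q) := (fun u => u 0) '' C with hA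
    set B : Set (Fin q) := (fun u => u 1) '' C with hB
    have hdisj : Disjoint A B := by
      rw [Set.disjoint_left]
      rintro a ⟨u, hu, hu0⟩ ⟨v, hv, hv1⟩
      replace hu0 : u 0 = a := hu0
      replace hv1 : v 1 = a := hv1
      apply hC u hu v hv
      refine ⟨1, one_pos, one_lt_two, Or.inl ?_⟩
      intro i hi
      have hi0 : i = 0 := by omega
      subst hi0
      exact hu0.trans hv1.symm
    have hsum : A.ncard + B.ncard ≤ q := by
      have h1 : (A ∪ B).ncard = A.ncard + B.ncard :=
        Set.ncard_union_eq hdisj (Set.toFinite A) (Set.toFinite B)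
      have h2 : (A ∪ B).ncard ≤ (Set.univ : Set (Fin q)).ncard :=
        Set.ncard_le_ncard (Set.subset_univ _) (Set.toFinite _)
      have h3 : (Set.univ : Set (Fin q)).ncard = q := by
        simp [Set.ncard_univ]
      omega
    have hinj : ∃ f : ↥C → ↥A × ↥B, Function.Injective f := by
      refine ⟨fun u => (⟨u.1 0, ⟨u.1, u.2, rfl⟩⟩, ⟨u.1 1, ⟨u.1, u.2, rfl⟩⟩), ?_⟩
      rintro ⟨u, hu⟩ ⟨v, hv⟩ h
      simp only [Prod.mk.injEq, Subtype.mk.injEq] at h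
      ext i
      fin_cases i
      · exact congrArg (fun x => (x.1 : Fin q).val) h.1
      · exact congrArg (fun x => (x.1 : Fin q).val) h.2
    obtain ⟨f, hf⟩ := hinj
    have hcard : C.ncard ≤ A.ncard * B.ncard := by
      have := Nat.card_le_card_of_injective f hf
      have hprod : Nat.card (↥A × ↥B) = A.ncard * B.ncard := by
        rw [Nat.card_prod, Nat.card_coe_set_eq, Nat.card_coe_set_eq]
      rw [← Nat.card_coe_set_eq, ← hprod]
      exact this
    exact hcard.trans (ab_le _ _ _ hsum)
  -- Lower bound: explicit construction
  have hq2 : q / 2 + (q + 1) / 2 = q := by omega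
  set g : Fin (q / 2) × Fin ((q + 1) / 2) → (Fin 2 → Fin q) := fun p =>
    ![⟨p.1.1, by have := p.1.2; omega⟩, ⟨q / 2 + p.2.1, by have := p.2.2; omega⟩] with hg
  have hginj : Function.Injective g := by
    rintro ⟨⟨a, ha⟩, ⟨b, hb⟩⟩ ⟨⟨a', ha'⟩, ⟨b', hb'⟩⟩ h
    have h0 := congrArg (fun u => (u 0 : Fin q).1) h
    have h1 := congrArg (fun u => (u 1 : Fin q).1) h
    simp [hg] at h0 h1
    simp only [Prod.mk.injEq, Fin.mk.injEq]
    omega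
  have hrange0 : ∀ u ∈ Set.range g, (u 0 : Fin q).1 < q / 2 := by
    rintro u ⟨p, rfl⟩
    simp [hg]
  have hrange1 : ∀ u ∈ Set.range g, q / 2 ≤ (u 1 : Fin q).1 := by
    rintro u ⟨p, rfl⟩
    simp [hg]
  have hno : NonOverlappingCode (Set.range g) := by
    rintro u hu v hv ⟨m, hm0, hm2, hor⟩
    have hm : m = 1 := by omega
    subst hm
    rcases hor with h | h
    · have := h 0 one_pos
      have e1 : (⟨0, by omega⟩ : Fin 2) = 0 := rfl
      have e2 : (⟨2 - 1 + 0, by omega⟩ : Fin 2) = 1 := rfl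
      rw [e1, e2] at this
      have := congrArg Fin.val this
      have hu0 := hrange0 u hu
      have hv1 := hrange1 v hv
      omega
    · have := h 0 one_pos
      have e1 : (⟨0, by omega⟩ : Fin 2) = 0 := rfl
      have e2 : (⟨2 - 1 + 0, by omega⟩ : Fin 2) = 1 := rfl
      rw [e1, e2] at this
      have := congrArg Fin.val this
      have hv0 := hrange0 v hv
      have hu1 := hrange1 u hu
      omega
  have hcount : (Set.range g).ncard = M := by
    rw [← Nat.card_coe_set_eq, Nat.card_range_of_injective hginj]
    simp [Nat.card_eq_fintype_card, hM]
  have hmem : M ∈ {m | ∃ C : Set (Fin 2 → Fin q), NonOverlappingCode C ∧ C.ncard = m} :=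
    ⟨Set.range g, hno, hcount⟩
  have hbdd : BddAbove {m | ∃ C : Set (Fin 2 → Fin q), NonOverlappingCode C ∧ C.ncard = m} :=
    ⟨M, upper⟩
  exact le_antisymm (csSup_le ⟨M, hmem⟩ upper) (le_csSup hbdd hmem)
end

section
/- The limit lim_{q→∞} C(2,q)/(q^2/2) exists and equals 1/2, where the limit is taken over integers q tending to infinity. -/
-- key: nonoverlapping for n=2 iff no u 0 = v 1
lemma overlap2 {q : ℕ} (u v : Fin 2 → Fin q) (h : u 0 = v 1) : Overlapping u v := by
  refine ⟨1, one_pos, one_lt_two, Or.inl ?_⟩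
  intro i hi
  interval_cases i
  exact h

lemma amgm (a b : ℕ) : 4 * (a * b) ≤ (a + b) ^ 2 := by
  rcases le_total a b with h | h
  · obtain ⟨c, rfl⟩ := le_iff_exists_add.mp h
    nlinarith
  · obtain ⟨c, rfl⟩ := le_iff_exists_add.mp h
    nlinarith

lemma code_bound {q : ℕ} (C : Set (Fin 2 → Fin q)) (hC : NonOverlappingCode C) :
    4 * C.ncard ≤ q ^ 2 := by
  classical
  set A : Set (Fin q) := (fun u => u 0) '' C with hA
  set B : Set (Fin q) := (fun u => u 1) '' C with hB
  have hdisj : Disjoint A B := by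
    rw [Set.disjoint_left]
    rintro x ⟨u, hu, rfl⟩ ⟨v, hv, hv1⟩
    exact hC u hu v hv (overlap2 u v hv1.symm)
  have hCle : C.ncard ≤ A.ncard * B.ncard := by
    have h1 : C.ncard ≤ (A ×ˢ B).ncard := by
      refine Set.ncard_le_ncard_of_injOn (fun u => (u 0, u 1)) ?_ ?_ (Set.toFinite _)
      · intro u hu; exact ⟨⟨u, hu, rfl⟩, ⟨u, hu, rfl⟩⟩
      · intro u _ v _ h
        funext i
        have h0 : u 0 = v 0 := congrArg Prod.fst h
        have h1 : u 1 = v 1 := congrArg Prod.snd h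
        fin_cases i <;> assumption
    have h2 : (A ×ˢ B).ncard = A.ncard * B.ncard := by
      rw [← Nat.card_coe_set_eq, ← Nat.card_coe_set_eq, ← Nat.card_coe_set_eq,
        Nat.card_congr (Equiv.Set.prod A B), Nat.card_prod]
    omega
  have hAB : A.ncard + B.ncard ≤ q := by
    rw [← Set.ncard_union_eq hdisj]
    calc (A ∪ B).ncard ≤ (Set.univ : Set (Fin q)).ncard :=
          Set.ncard_le_ncard (Set.subset_univ _)
      _ = q := by rw [Set.ncard_univ, Nat.card_eq_fintype_card, Fintype.card_fin]
  have h4 : 4 * (A.ncard * B.ncard) ≤ (A.ncard + B.ncard) ^ 2 := amgm _ _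
  have h5 : (A.ncard + B.ncard) ^ 2 ≤ q ^ 2 := Nat.pow_le_pow_left hAB 2
  nlinarith

lemma set_bdd (q : ℕ) :
    BddAbove {m | ∃ C : Set (Fin 2 → Fin q), NonOverlappingCode C ∧ C.ncard = m} := by
  refine ⟨q ^ 2, ?_⟩
  rintro m ⟨C, hC, rfl⟩
  have := code_bound C hC
  omega

lemma upper_bound (q : ℕ) : 4 * maxNOCode 2 q ≤ q ^ 2 := by
  have : maxNOCode 2 q ≤ q ^ 2 / 4 := by
    apply csSup_le'
    rintro m ⟨C, hC, rfl⟩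
    have := code_bound C hC
    omega
  have h4 : 4 * (q ^ 2 / 4) ≤ q ^ 2 := Nat.mul_div_le _ 4 |>.trans_eq (by ring_nf) |>.trans le_rfl
  omega

lemma lower_bound (q : ℕ) : q / 2 * (q - q / 2) ≤ maxNOCode 2 q := by
  classical
  set a := q / 2 with ha
  have haq : a ≤ q := Nat.div_le_self _ _
  let e : Fin a × Fin (q - a) → (Fin 2 → Fin q) := fun p =>
    ![⟨p.1, by omega⟩, ⟨a + p.2, by omega⟩]
  have hinj : Function.Injective e := by
    intro p p' h
    have h0 : (e p) 0 = (e p') 0 := by rw [h]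
    have h1 : (e p) 1 = (e p') 1 := by rw [h]
    simp only [e, Matrix.cons_val_zero, Matrix.cons_val_one, Matrix.head_cons,
      Fin.mk.injEq] at h0 h1
    exact Prod.ext (Fin.ext h0) (Fin.ext (by omega))
  have hno : NonOverlappingCode (Set.range e) := by
    rintro u ⟨p, rfl⟩ v ⟨p', rfl⟩ ⟨m, hm1, hm2, h⟩
    have hm : m = 1 := by omega
    subst hm
    rcases h with h | h
    · have := h 0 one_pos
      have h0 : (e p) ⟨0, by omega⟩ = (e p) 0 := rfl
      have h1 : (e p') ⟨2 - 1 + 0, by omega⟩ = (e p') 1 := rfl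
      rw [h0, h1] at this
      simp only [e, Matrix.cons_val_zero, Matrix.cons_val_one, Matrix.head_cons,
        Fin.mk.injEq] at this
      omega
    · have := h 0 one_pos
      have h0 : (e p') ⟨0, by omega⟩ = (e p') 0 := rfl
      have h1 : (e p) ⟨2 - 1 + 0, by omega⟩ = (e p) 1 := rfl
      rw [h0, h1] at this
      simp only [e, Matrix.cons_val_zero, Matrix.cons_val_one, Matrix.head_cons,
        Fin.mk.injEq] at this
      omega
  have hcard : (Set.range e).ncard = a * (q - a) := by
    rw [← Nat.card_coe_set_eq, Nat.card_range_of_injective hinj, Nat.card_prod,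
      Nat.card_eq_fintype_card, Nat.card_eq_fintype_card, Fintype.card_fin, Fintype.card_fin]
  exact le_csSup (set_bdd q) ⟨Set.range e, hno, hcard⟩

lemma lower_bound' (q : ℕ) : q ^ 2 ≤ 4 * maxNOCode 2 q + 1 := by
  have h := lower_bound q
  have hq : q = 2 * (q / 2) + q % 2 := (Nat.div_add_mod q 2).symm
  have hr : q % 2 ≤ 1 := by omega
  set a := q / 2
  set r := q % 2
  have hsub : q - a = a + r := by omega
  have : q ^ 2 ≤ 4 * (a * (q - a)) + 1 := by
    rw [hsub]
    nlinarith [hq, hr]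
  omega

/-- Theorem 4 of Blackburn, "Non-overlapping codes": `lim_{q→∞} C(2,q)/(q²/2) = 1/2`. -/
theorem stmt13 :
    Filter.Tendsto (fun q : ℕ => (maxNOCode 2 q : ℝ) / ((q : ℝ) ^ 2 / 2))
      Filter.atTop (nhds (1 / 2)) := by
  have hsq : Filter.Tendsto (fun q : ℕ => 2 * (q : ℝ) ^ 2) Filter.atTop Filter.atTop := by
    apply Filter.Tendsto.const_mul_atTop two_pos
    exact (Filter.tendsto_pow_atTop (by norm_num)).comp tendsto_natCast_atTop_atTop
  have hlow : Filter.Tendsto (fun q : ℕ => (1 : ℝ) / 2 - 1 / (2 * (q : ℝ) ^ 2))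
      Filter.atTop (nhds (1 / 2)) := by
    have h0 : Filter.Tendsto (fun q : ℕ => 1 / (2 * (q : ℝ) ^ 2)) Filter.atTop (nhds 0) := by
      have := hsq.inv_tendsto_atTop
      simp only [Pi.inv_def] at this
      simpa [one_div] using this
    simpa using tendsto_const_nhds.sub h0
  refine tendsto_of_tendsto_of_tendsto_of_le_of_le' hlow tendsto_const_nhds ?_ ?_
  · filter_upwards [Filter.eventually_ge_atTop 1] with q hq
    have hq1 : (1 : ℝ) ≤ (q : ℝ) := by exact_mod_cast hq
    have hq2 : (0 : ℝ) < (q : ℝ) ^ 2 := by nlinarith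
    have hlb : ((q : ℝ)) ^ 2 ≤ 4 * (maxNOCode 2 q : ℝ) + 1 := by
      exact_mod_cast lower_bound' q
    rw [le_div_iff₀ (by linarith)]
    have hexp : (1 / 2 - 1 / (2 * (q : ℝ) ^ 2)) * ((q : ℝ) ^ 2 / 2)
        = (q : ℝ) ^ 2 / 4 - 1 / 4 := by
      field_simp
      ring
    rw [hexp]
    linarith
  · filter_upwards [Filter.eventually_ge_atTop 1] with q hq
    have hq1 : (1 : ℝ) ≤ (q : ℝ) := by exact_mod_cast hq
    have hq2 : (0 : ℝ) < (q : ℝ) ^ 2 := by nlinarith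
    have hub : 4 * (maxNOCode 2 q : ℝ) ≤ (q : ℝ) ^ 2 := by
      exact_mod_cast upper_bound q
    rw [div_le_iff₀ (by linarith)]
    linarith
end

section
/- Let q ≥ 2 be an integer and let F be an alphabet with |F| = q. Then every non-overlapping code C ⊆ F^3 satisfies |C| ≤ max_{i ∈ {1, 2, …, q−1}} i^2·(q−i). -/
private lemma stmt14_arith {q i b sa pb X : ℕ} (hiA : 1 ≤ i) (hiB : 1 ≤ b)
    (hABle : i + b ≤ q) (hgrid : sa + pb ≤ i * b)
    (main : X ≤ i * sa + b * pb + (q - (i + b)) * (i * b)) :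
    X ≤ (Finset.Icc 1 (q - 1)).sup (fun j => j ^ 2 * (q - j)) := by
  obtain ⟨c, hc⟩ : ∃ c, q = i + b + c := ⟨q - (i + b), by omega⟩
  subst hc
  have hcq : i + b + c - (i + b) = c := by omega
  rw [hcq] at main
  rcases le_total i b with hib | hib
  · have hj : b + c ∈ Finset.Icc 1 (i + b + c - 1) := by
      simp only [Finset.mem_Icc]; omega
    refine le_trans ?_ (Finset.le_sup (f := fun j => j ^ 2 * (i + b + c - j)) hj)
    refine le_trans main ?_
    show i * sa + b * pb + c * (i * b) ≤ (b + c) ^ 2 * (i + b + c - (b + c))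
    have h2 : i + b + c - (b + c) = i := by omega
    rw [h2]
    have h3 : i * sa ≤ b * sa := Nat.mul_le_mul_right sa hib
    have h4 : b * (sa + pb) ≤ b * (i * b) := Nat.mul_le_mul_left b hgrid
    have h5 : (b + c) * (i * b) ≤ (b + c) * (i * (b + c)) :=
      Nat.mul_le_mul_left _ (Nat.mul_le_mul_left _ (Nat.le_add_right b c))
    nlinarith [h3, h4, h5]
  · have hj : i + c ∈ Finset.Icc 1 (i + b + c - 1) := by
      simp only [Finset.mem_Icc]; omega
    refine le_trans ?_ (Finset.le_sup (f := fun j => j ^ 2 * (i + b + c - j)) hj)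
    refine le_trans main ?_
    show i * sa + b * pb + c * (i * b) ≤ (i + c) ^ 2 * (i + b + c - (i + c))
    have h2 : i + b + c - (i + c) = b := by omega
    rw [h2]
    have h3 : b * pb ≤ i * pb := Nat.mul_le_mul_right pb hib
    have h4 : i * (sa + pb) ≤ i * (i * b) := Nat.mul_le_mul_left i hgrid
    have h5 : (i + c) * (i * b) ≤ (i + c) * ((i + c) * b) :=
      Nat.mul_le_mul_left _ (Nat.mul_le_mul_right _ (Nat.le_add_right i c))
    nlinarith [h3, h4, h5]

/-- Upper-bound step in Theorem 5 of Blackburn, "Non-overlapping codes": any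
non-overlapping code `C ⊆ F³` over an alphabet of size `q` satisfies
`|C| ≤ max_{1 ≤ i ≤ q-1} i²(q - i)`. -/
theorem stmt14 {F : Type*} [Fintype F] {q : ℕ} (hq : 2 ≤ q) (hF : Fintype.card F = q)
    (C : Set (Fin 3 → F)) (hC : NonOverlappingCode C) :
    C.ncard ≤ (Finset.Icc 1 (q - 1)).sup (fun i => i ^ 2 * (q - i)) := by
  classical
  have hfin : C.Finite := Set.toFinite C
  rw [Set.ncard_eq_toFinset_card C hfin]
  set Cf : Finset (Fin 3 → F) := hfin.toFinset with hCfdef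
  have hmem : ∀ w, w ∈ Cf ↔ w ∈ C := fun w => hfin.mem_toFinset
  rcases Cf.eq_empty_or_nonempty with hE | hne
  · simp [hE]
  -- key consequences of non-overlapping
  have key1 : ∀ u ∈ Cf, ∀ v ∈ Cf, u 0 ≠ v 2 := by
    intro u hu v hv h
    refine hC u ((hmem u).1 hu) v ((hmem v).1 hv)
      ⟨1, one_pos, by omega, Or.inl ?_⟩
    intro i hi
    interval_cases i
    simpa using h
  have key2 : ∀ u ∈ Cf, ∀ v ∈ Cf, ¬ (u 0 = v 1 ∧ u 1 = v 2) := by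
    rintro u hu v hv ⟨h1, h2⟩
    refine hC u ((hmem u).1 hu) v ((hmem v).1 hv)
      ⟨2, two_pos, by omega, Or.inl ?_⟩
    intro i hi
    interval_cases i
    · simpa using h1
    · simpa using h2
  set A : Finset F := Cf.image (fun w => w 0) with hA
  set B : Finset F := Cf.image (fun w => w 2) with hB
  set P : Finset (F × F) := Cf.image (fun w => (w 0, w 1)) with hP
  set S : Finset (F × F) := Cf.image (fun w => (w 1, w 2)) with hS
  have hPfst : ∀ x ∈ P, x.1 ∈ A := by
    intro x hx
    obtain ⟨w, hw, rfl⟩ := Finset.mem_image.mp hx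
    exact Finset.mem_image_of_mem _ hw
  have hSsnd : ∀ x ∈ S, x.2 ∈ B := by
    intro x hx
    obtain ⟨w, hw, rfl⟩ := Finset.mem_image.mp hx
    exact Finset.mem_image_of_mem _ hw
  have hAB : Disjoint A B := by
    rw [Finset.disjoint_left]
    intro a haA haB
    obtain ⟨u, hu, hu0⟩ := Finset.mem_image.mp haA
    obtain ⟨v, hv, hv2⟩ := Finset.mem_image.mp haB
    exact key1 u hu v hv (hu0.trans hv2.symm)
  have hPS : Disjoint P S := by
    rw [Finset.disjoint_left]
    intro x hxP hxS
    obtain ⟨u, hu, hux⟩ := Finset.mem_image.mp hxP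
    obtain ⟨v, hv, hvx⟩ := Finset.mem_image.mp hxS
    refine key2 u hu v hv ⟨?_, ?_⟩
    · have := congrArg Prod.fst (hux.trans hvx.symm); simpa using this
    · have := congrArg Prod.snd (hux.trans hvx.symm); simpa using this
  -- fiberwise counting
  have total : Cf.card = ∑ m : F, (Cf.filter (fun w => w 1 = m)).card :=
    Finset.card_eq_sum_card_fiberwise (fun w _ => Finset.mem_univ _)
  have fiber : ∀ m : F, (Cf.filter (fun w => w 1 = m)).card ≤
      (P.filter (fun x => x.2 = m)).card * (S.filter (fun x => x.1 = m)).card := by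
    intro m
    rw [← Finset.card_product]
    apply Finset.card_le_card_of_injOn (fun w => ((w 0, w 1), (w 1, w 2)))
    · intro w hw
      rw [Finset.mem_coe, Finset.mem_filter] at hw
      rw [Finset.mem_coe, Finset.mem_product, Finset.mem_filter, Finset.mem_filter]
      exact ⟨⟨Finset.mem_image_of_mem _ hw.1, hw.2⟩,
             ⟨Finset.mem_image_of_mem _ hw.1, hw.2⟩⟩
    · intro w hw w' hw' h
      simp only [Prod.mk.injEq] at h
      funext j
      fin_cases j
      · exact h.1.1
      · exact h.1.2
      · exact h.2.2
  have hp : ∀ m : F, (P.filter (fun x => x.2 = m)).card ≤ A.card := by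
    intro m
    apply Finset.card_le_card_of_injOn Prod.fst
    · intro x hx
      exact hPfst x (Finset.mem_filter.mp hx).1
    · intro x hx y hy hxy
      have hx2 := (Finset.mem_filter.mp hx).2
      have hy2 := (Finset.mem_filter.mp hy).2
      exact Prod.ext hxy (hx2.trans hy2.symm)
  have hs : ∀ m : F, (S.filter (fun x => x.1 = m)).card ≤ B.card := by
    intro m
    apply Finset.card_le_card_of_injOn Prod.snd
    · intro x hx
      exact hSsnd x (Finset.mem_filter.mp hx).1
    · intro x hx y hy hxy
      have hx2 := (Finset.mem_filter.mp hx).2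
      have hy2 := (Finset.mem_filter.mp hy).2
      exact Prod.ext (hx2.trans hy2.symm) hxy
  set SA : Finset (F × F) := S.filter (fun x => x.1 ∈ A) with hSA
  set PB : Finset (F × F) := P.filter (fun x => x.2 ∈ B) with hPB
  have hSAsum : ∑ m ∈ A, (S.filter (fun x => x.1 = m)).card = SA.card := by
    rw [Finset.card_eq_sum_card_fiberwise (s := SA) (f := Prod.fst) (t := A)
      (fun x hx => (Finset.mem_filter.mp hx).2)]
    apply Finset.sum_congr rfl
    intro m hm
    congr 1
    ext x
    simp only [Finset.mem_filter, hSA]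
    constructor
    · rintro ⟨hxS, hx1⟩; exact ⟨⟨hxS, hx1 ▸ hm⟩, hx1⟩
    · rintro ⟨⟨hxS, _⟩, hx1⟩; exact ⟨hxS, hx1⟩
  have hPBsum : ∑ m ∈ B, (P.filter (fun x => x.2 = m)).card = PB.card := by
    rw [Finset.card_eq_sum_card_fiberwise (s := PB) (f := Prod.snd) (t := B)
      (fun x hx => (Finset.mem_filter.mp hx).2)]
    apply Finset.sum_congr rfl
    intro m hm
    congr 1
    ext x
    simp only [Finset.mem_filter, hPB]
    constructor
    · rintro ⟨hxP, hx2⟩; exact ⟨⟨hxP, hx2 ▸ hm⟩, hx2⟩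
    · rintro ⟨⟨hxP, _⟩, hx2⟩; exact ⟨hxP, hx2⟩
  have hgrid : SA.card + PB.card ≤ A.card * B.card := by
    have hdisj : Disjoint SA PB :=
      (hPS.symm.mono (Finset.filter_subset _ _) (Finset.filter_subset _ _))
    rw [← Finset.card_union_of_disjoint hdisj, ← Finset.card_product]
    apply Finset.card_le_card
    intro x hx
    rw [Finset.mem_union] at hx
    rw [Finset.mem_product]
    rcases hx with hx | hx
    · have h := Finset.mem_filter.mp hx
      exact ⟨h.2, hSsnd x h.1⟩
    · have h := Finset.mem_filter.mp hx
      exact ⟨hPfst x h.1, h.2⟩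
  -- split the sum
  set f : F → ℕ := fun m =>
    (P.filter (fun x => x.2 = m)).card * (S.filter (fun x => x.1 = m)).card with hf
  have hsplit : ∑ m : F, f m =
      ∑ m ∈ Finset.univ \ (A ∪ B), f m + (∑ m ∈ A, f m + ∑ m ∈ B, f m) := by
    rw [← Finset.sum_union hAB, Finset.sum_sdiff (Finset.subset_univ _)]
  have hbA : ∑ m ∈ A, f m ≤ A.card * SA.card := by
    rw [← hSAsum, Finset.mul_sum]
    exact Finset.sum_le_sum (fun m _ => Nat.mul_le_mul_right _ (hp m))
  have hbB : ∑ m ∈ B, f m ≤ B.card * PB.card := by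
    rw [← hPBsum, Finset.mul_sum]
    exact Finset.sum_le_sum (fun m _ => by
      rw [Nat.mul_comm]
      exact Nat.mul_le_mul_left _ (hs m))
  have hbD : ∑ m ∈ Finset.univ \ (A ∪ B), f m ≤
      (q - (A.card + B.card)) * (A.card * B.card) := by
    have hcard : (Finset.univ \ (A ∪ B)).card = q - (A.card + B.card) := by
      rw [Finset.card_sdiff_of_subset (Finset.subset_univ _), Finset.card_univ, hF,
        Finset.card_union_of_disjoint hAB]
    calc ∑ m ∈ Finset.univ \ (A ∪ B), f m
        ≤ ∑ _m ∈ Finset.univ \ (A ∪ B), A.card * B.card :=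
          Finset.sum_le_sum (fun m _ => Nat.mul_le_mul (hp m) (hs m))
      _ = (q - (A.card + B.card)) * (A.card * B.card) := by
          rw [Finset.sum_const, smul_eq_mul, hcard]
  -- basic cardinality facts
  have hiA : 1 ≤ A.card := Finset.card_pos.mpr (hne.image _)
  have hiB : 1 ≤ B.card := Finset.card_pos.mpr (hne.image _)
  have hABle : A.card + B.card ≤ q := by
    rw [← Finset.card_union_of_disjoint hAB, ← hF, ← Finset.card_univ]
    exact Finset.card_le_card (Finset.subset_univ _)
  -- put it together
  have main : Cf.card ≤ A.card * SA.card + B.card * PB.card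
      + (q - (A.card + B.card)) * (A.card * B.card) := by
    calc Cf.card = ∑ m : F, (Cf.filter (fun w => w 1 = m)).card := total
      _ ≤ ∑ m : F, f m := Finset.sum_le_sum (fun m _ => fiber m)
      _ = ∑ m ∈ Finset.univ \ (A ∪ B), f m + (∑ m ∈ A, f m + ∑ m ∈ B, f m) := hsplit
      _ ≤ (q - (A.card + B.card)) * (A.card * B.card)
            + (A.card * SA.card + B.card * PB.card) :=
          Nat.add_le_add hbD (Nat.add_le_add hbA hbB)
      _ = _ := by ring
  -- final arithmetic
  exact stmt14_arith hiA hiB hABle hgrid main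
end

section
/- Let q ≥ 2 be an integer. Then max_{i ∈ {1, 2, …, q−1}} i^2·(q−i) = [2q/3]^2·(q − [2q/3]), where [x] denotes the nearest integer to the real number x. -/
lemma aux15 (Q M I : ℤ) (hI1 : 1 ≤ I) (hI2 : I ≤ Q - 1) (hM : 2*Q - 1 ≤ 3*M)
    (hM2 : 3*M ≤ 2*Q+1) : I^2*(Q-I) ≤ M^2*(Q-M) := by
  rcases lt_trichotomy I M with h | h | h
  · have hb : 0 ≤ Q*(M+I) - (M^2+M*I+I^2) := by
      nlinarith [mul_nonneg (by linarith : (0:ℤ) ≤ M - I - 1) (by linarith : (0:ℤ) ≤ M + 2*I)]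
    nlinarith [mul_nonneg (by linarith : (0:ℤ) ≤ M - I) hb]
  · simp [h]
  · have hb : 0 ≤ (M^2+M*I+I^2) - Q*(M+I) := by
      nlinarith [mul_nonneg (by linarith : (0:ℤ) ≤ I - M - 1) (by linarith : (0:ℤ) ≤ 2*I + M)]
    nlinarith [mul_nonneg (by linarith : (0:ℤ) ≤ I - M) hb]

/-- Optimisation step in Theorem 5 of Blackburn, "Non-overlapping codes":
`max_{1 ≤ i ≤ q-1} i²(q - i) = [2q/3]² (q - [2q/3])`, where `[x]` is the nearest
integer to `x`. -/
theorem stmt15 {q : ℕ} (hq : 2 ≤ q) :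
    (((Finset.Icc 1 (q - 1)).sup (fun i => i ^ 2 * (q - i)) : ℕ) : ℤ)
      = (round ((2 * (q : ℚ)) / 3)) ^ 2 * ((q : ℤ) - round ((2 * (q : ℚ)) / 3)) := by
  obtain ⟨m, hm1, hm2, hm3, hm4⟩ :
      ∃ m : ℕ, 1 ≤ m ∧ m ≤ q - 1 ∧ 2*q ≤ 3*m + 1 ∧ 3*m ≤ 2*q + 1 := by
    refine ⟨if q % 3 = 0 then 2*(q/3) else 2*(q/3)+1, ?_⟩
    split <;> omega
  have hc1 : (3:ℚ)*m ≤ 2*q+1 := by exact_mod_cast (by exact_mod_cast hm4 : ((3*m:ℕ):ℚ) ≤ ((2*q+1:ℕ):ℚ))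
  have hc2 : (2:ℚ)*q ≤ 3*m+1 := by exact_mod_cast (by exact_mod_cast hm3 : ((2*q:ℕ):ℚ) ≤ ((3*m+1:ℕ):ℚ))
  have hround : round ((2 * (q : ℚ)) / 3) = (m : ℤ) := by
    rw [round_eq, Int.floor_eq_iff]
    constructor
    · push_cast
      linarith
    · push_cast
      linarith
  have hsup : (Finset.Icc 1 (q - 1)).sup (fun i => i ^ 2 * (q - i)) = m ^ 2 * (q - m) := by
    apply le_antisymm
    · apply Finset.sup_le
      intro i hi
      rw [Finset.mem_Icc] at hi
      have h := aux15 (q:ℤ) (m:ℤ) (i:ℤ) (by omega) (by omega) (by omega) (by omega)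
      zify [show i ≤ q by omega, show m ≤ q by omega]
      linarith
    · exact Finset.le_sup (f := fun i => i ^ 2 * (q - i)) (Finset.mem_Icc.2 ⟨hm1, hm2⟩)
  rw [hsup, hround]
  push_cast [Nat.cast_sub (show m ≤ q by omega)]
  ring
end

section
/- Let q ≥ 2 be an integer. Then C(3,q) = [2q/3]^2·(q − [2q/3]), where [x] denotes the nearest integer to the real number x; that is, a largest q-ary non-overlapping code of length 3 has exactly [2q/3]^2·(q − [2q/3]) codewords. -/
open Finset

/-! ### Auxiliary lemmas -/

lemma aux_round (q : ℕ) : round ((2 * (q:ℚ))/3) = ((2*q+1)/3 : ℕ) := by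
  rw [round_eq]
  have : (2 * (q:ℚ))/3 + 1/2 = ((4*q+3 : ℕ) : ℚ) / ((6:ℕ):ℚ) := by push_cast; ring
  rw [this, Rat.floor_natCast_div_natCast]
  omega

lemma aux_arith (q k s : ℤ) (hq : 2 ≤ q) (h1 : 2*q - 1 ≤ 3*k) (h2 : 3*k ≤ 2*q+1)
    (hs0 : 0 ≤ s) (hsq : s ≤ q) : s^2*(q-s) ≤ k^2*(q-k) := by
  have hkq : k ≤ q := by omega
  rcases lt_trichotomy s k with h | h | h
  · nlinarith [mul_nonneg hs0 (by omega : (0:ℤ) ≤ k - 1 - s), sq_nonneg (3*k - 2*q),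
      mul_nonneg (by omega : (0:ℤ) ≤ k - 1 - s) (by omega : (0:ℤ) ≤ k - 1 - s)]
  · simp [h]
  · have hk1 : 1 ≤ k := by omega
    have hh : 0 ≤ s^2 + (k-q)*s + k^2 - q*k := by
      nlinarith [mul_nonneg (by omega : (0:ℤ) ≤ s - k - 1) (by omega : (0:ℤ) ≤ q - s),
        mul_nonneg (by omega : (0:ℤ) ≤ k) (by omega : (0:ℤ) ≤ 3*k - 2*q + 1)]
    nlinarith [mul_nonneg (by omega : (0:ℤ) ≤ s - k) hh]

lemma aux_card_lt (q k : ℕ) (hk : k ≤ q) :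
    (univ.filter (fun x : Fin q => (x:ℕ) < k)).card = k := by
  rcases eq_or_lt_of_le hk with h | h
  · subst h
    simp only [filter_true_of_mem (fun x _ => Fin.isLt x), card_univ, Fintype.card_fin]
  · have : (univ.filter (fun x : Fin q => (x:ℕ) < k)) = Finset.Iio (⟨k, h⟩ : Fin q) := by
      ext x; simp [Fin.lt_def]
    rw [this, Fin.card_Iio]

lemma aux_card_ge (q k : ℕ) (hk : k ≤ q) :
    (univ.filter (fun x : Fin q => k ≤ (x:ℕ))).card = q - k := by
  have h2 := Finset.card_filter_add_card_filter_not (s := (univ : Finset (Fin q)))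
    (p := fun x : Fin q => (x:ℕ) < k)
  simp only [not_lt, card_univ, Fintype.card_fin] at h2
  have := aux_card_lt q k hk
  omega

/-- The lower-bound construction: length-3 words with first two letters `< k` and
last letter `≥ k`. -/
lemma aux_lower (q k : ℕ) (hk : k ≤ q) :
    ∃ C : Set (Fin 3 → Fin q), NonOverlappingCode C ∧ C.ncard = k^2 * (q - k) := by
  classical
  refine ⟨{u | (u 0 : ℕ) < k ∧ (u 1 : ℕ) < k ∧ k ≤ (u 2 : ℕ)}, ?_, ?_⟩
  · rintro u ⟨hu0, hu1, hu2⟩ v ⟨hv0, hv1, hv2⟩ ⟨m, hm0, hm3, H⟩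
    interval_cases m
    · rcases H with H | H
      · have := H 0 (by norm_num)
        simp only [show (⟨0, by omega⟩ : Fin 3) = 0 from rfl,
          show (⟨3-1+0, by omega⟩ : Fin 3) = 2 from rfl] at this
        omega
      · have := H 0 (by norm_num)
        simp only [show (⟨0, by omega⟩ : Fin 3) = 0 from rfl,
          show (⟨3-1+0, by omega⟩ : Fin 3) = 2 from rfl] at this
        omega
    · rcases H with H | H
      · have := H 1 (by norm_num)
        simp only [show (⟨1, by omega⟩ : Fin 3) = 1 from rfl,
          show (⟨3-2+1, by omega⟩ : Fin 3) = 2 from rfl] at this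
        omega
      · have := H 1 (by norm_num)
        simp only [show (⟨1, by omega⟩ : Fin 3) = 1 from rfl,
          show (⟨3-2+1, by omega⟩ : Fin 3) = 2 from rfl] at this
        omega
  · have hD : {u : Fin 3 → Fin q | (u 0 : ℕ) < k ∧ (u 1 : ℕ) < k ∧ k ≤ (u 2 : ℕ)}
        = ↑(Fintype.piFinset (fun i : Fin 3 =>
        if i = 2 then univ.filter (fun x : Fin q => k ≤ (x:ℕ))
        else univ.filter (fun x : Fin q => (x:ℕ) < k))) := by
      ext u
      simp only [Set.mem_setOf_eq, Finset.mem_coe, Fintype.mem_piFinset]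
      constructor
      · rintro ⟨h0, h1, h2⟩ i
        fin_cases i <;> simp_all
      · intro h
        refine ⟨?_, ?_, ?_⟩
        · have := h 0; simpa using this
        · have := h 1; simpa using this
        · have := h 2; simpa using this
    rw [hD, Set.ncard_coe_finset, Fintype.card_piFinset, Fin.prod_univ_three]
    rw [if_neg (by decide), if_neg (by decide), if_pos rfl, aux_card_lt q k hk,
      aux_card_ge q k hk]
    ring

lemma aux_nat (q a b s1 s2 m : ℕ) (habq : a + b ≤ q) (h4 : s1 + s2 ≤ a * b)
    (ht : m ≤ a * s1 + s2 * b + (q - a - b) * (a * b)) :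
    ∃ t, t ≤ q ∧ m ≤ t * (q - t)^2 := by
  rcases le_total b a with hba | hab
  · refine ⟨b, by omega, ?_⟩
    have k1 : s2 * b ≤ s2 * a := Nat.mul_le_mul (le_refl s2) hba
    have k2 : a * (s1 + s2) ≤ a * (a * b) := Nat.mul_le_mul (le_refl a) h4
    have e2 : a ≤ q - b := by omega
    have e3 : q - a - b + a = q - b := by omega
    calc m ≤ a * s1 + s2 * b + (q - a - b) * (a * b) := ht
    _ ≤ a * s1 + s2 * a + (q - a - b) * (a * b) := by omega
    _ = a * (s1 + s2) + (q - a - b) * (a * b) := by ring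
    _ ≤ a * (a * b) + (q - a - b) * (a * b) := by omega
    _ = (q - a - b + a) * (a * b) := by ring
    _ = (q - b) * (a * b) := by rw [e3]
    _ ≤ (q - b) * ((q - b) * b) := Nat.mul_le_mul (le_refl _) (Nat.mul_le_mul e2 (le_refl b))
    _ = b * (q - b)^2 := by ring
  · refine ⟨a, by omega, ?_⟩
    have k1 : a * s1 ≤ b * s1 := Nat.mul_le_mul hab (le_refl s1)
    have k2 : b * (s1 + s2) ≤ b * (a * b) := Nat.mul_le_mul (le_refl b) h4
    have e2 : b ≤ q - a := by omega
    have e3 : q - a - b + b = q - a := by omega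
    calc m ≤ a * s1 + s2 * b + (q - a - b) * (a * b) := ht
    _ ≤ b * s1 + s2 * b + (q - a - b) * (a * b) := by omega
    _ = b * (s1 + s2) + (q - a - b) * (a * b) := by ring
    _ ≤ b * (a * b) + (q - a - b) * (a * b) := by omega
    _ = (q - a - b + b) * (a * b) := by ring
    _ = (q - a) * (a * b) := by rw [e3]
    _ ≤ (q - a) * (a * (q - a)) := Nat.mul_le_mul (le_refl _) (Nat.mul_le_mul (le_refl a) e2)
    _ = a * (q - a)^2 := by ring

/-- Upper bound: any non-overlapping code of length 3 has at most `t*(q-t)^2` codewords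
for some `t ≤ q`. -/
lemma aux_upper (q : ℕ) (C : Set (Fin 3 → Fin q)) (hC : NonOverlappingCode C) :
    ∃ t : ℕ, t ≤ q ∧ C.ncard ≤ t * (q - t)^2 := by
  classical
  have hfin : C.Finite := Set.toFinite C
  set Cf := hfin.toFinset with hCf
  have hmem : ∀ u, u ∈ Cf ↔ u ∈ C := fun u => hfin.mem_toFinset
  -- basic consequences of non-overlapping
  have key1 : ∀ u ∈ Cf, ∀ v ∈ Cf, u 0 ≠ v 2 := by
    intro u hu v hv contra
    refine hC u ((hmem u).1 hu) v ((hmem v).1 hv) ⟨1, one_pos, by norm_num, Or.inl ?_⟩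
    intro i hi
    interval_cases i
    exact contra
  have key2 : ∀ u ∈ Cf, ∀ v ∈ Cf, ¬(u 0 = v 1 ∧ u 1 = v 2) := by
    rintro u hu v hv ⟨c1, c2⟩
    refine hC u ((hmem u).1 hu) v ((hmem v).1 hv) ⟨2, by norm_num, by norm_num, Or.inl ?_⟩
    intro i hi
    interval_cases i
    · exact c1
    · exact c2
  set A := Cf.image (fun u => u 0) with hA
  set B := Cf.image (fun u => u 2) with hB
  set P := Cf.image (fun u => (u 0, u 1)) with hP
  set S := Cf.image (fun u => (u 1, u 2)) with hS
  set Py := fun y => (P.filter (fun p => p.2 = y)).image Prod.fst with hPy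
  set Sy := fun y => (S.filter (fun p => p.1 = y)).image Prod.snd with hSy
  set a := A.card with ha
  set b := B.card with hb
  have hPA : ∀ p ∈ P, p.1 ∈ A := by
    intro p hp
    rw [hP, mem_image] at hp
    obtain ⟨u, hu, rfl⟩ := hp
    exact mem_image_of_mem _ hu
  have hSB : ∀ p ∈ S, p.2 ∈ B := by
    intro p hp
    rw [hS, mem_image] at hp
    obtain ⟨u, hu, rfl⟩ := hp
    exact mem_image_of_mem _ hu
  have hPyA : ∀ y, Py y ⊆ A := by
    intro y x hx
    rw [hPy, mem_image] at hx
    obtain ⟨p, hp, rfl⟩ := hx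
    exact hPA p (mem_filter.1 hp).1
  have hSyB : ∀ y, Sy y ⊆ B := by
    intro y x hx
    rw [hSy, mem_image] at hx
    obtain ⟨p, hp, rfl⟩ := hx
    exact hSB p (mem_filter.1 hp).1
  -- step 1: fiberwise count
  have step1 : Cf.card = ∑ y : Fin q, (Cf.filter (fun u => u 1 = y)).card :=
    card_eq_sum_card_fiberwise (fun u _ => mem_univ (u 1))
  -- step 2: each fiber injects into Py y × Sy y
  have step2 : ∀ y, (Cf.filter (fun u => u 1 = y)).card ≤ (Py y).card * (Sy y).card := by
    intro y
    rw [← card_product]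
    apply card_le_card_of_injOn (fun u => (u 0, u 2))
    · intro u hu
      rw [mem_coe, mem_filter] at hu
      obtain ⟨hu, huy⟩ := hu
      rw [mem_coe, mem_product]
      constructor
      · rw [hPy, mem_image]
        exact ⟨(u 0, u 1), mem_filter.2 ⟨mem_image_of_mem _ hu, huy⟩, rfl⟩
      · rw [hSy, mem_image]
        exact ⟨(u 1, u 2), mem_filter.2 ⟨mem_image_of_mem _ hu, huy⟩, rfl⟩
    · intro u hu v hv huv
      rw [coe_filter, Set.mem_setOf_eq] at hu hv
      simp only [Prod.mk.injEq] at huv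
      funext i
      fin_cases i
      · exact huv.1
      · show u 1 = v 1
        rw [hu.2, hv.2]
      · exact huv.2
  -- disjointness of P and S
  have hdisjPS : Disjoint P S := by
    rw [disjoint_left]
    intro p hpP hpS
    rw [hP, mem_image] at hpP
    rw [hS, mem_image] at hpS
    obtain ⟨u, hu, hup⟩ := hpP
    obtain ⟨v, hv, hvp⟩ := hpS
    have heq : (u 0, u 1) = (v 1, v 2) := hup.trans hvp.symm
    rw [Prod.mk.injEq] at heq
    exact key2 u hu v hv heq
  -- disjointness of A and B
  have hdisjAB : Disjoint A B := by
    rw [disjoint_left]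
    intro x hxA hxB
    rw [hA, mem_image] at hxA
    rw [hB, mem_image] at hxB
    obtain ⟨u, hu, hux⟩ := hxA
    obtain ⟨v, hv, hvx⟩ := hxB
    exact key1 u hu v hv (hux.trans hvx.symm)
  have habq : a + b ≤ q := by
    rw [ha, hb, ← card_union_of_disjoint hdisjAB]
    calc (A ∪ B).card ≤ (univ : Finset (Fin q)).card := card_le_card (subset_univ _)
    _ = q := by simp
  -- step 4 : sum over A of |Sy| plus sum over B of |Py| is at most a*b
  have hSycard : ∀ y, (Sy y).card = (S.filter (fun p => p.1 = y)).card := by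
    intro y
    rw [hSy]
    apply card_image_of_injOn
    intro p hp p' hp' hpp
    rw [coe_filter, Set.mem_setOf_eq] at hp hp'
    exact Prod.ext (hp.2.trans hp'.2.symm) hpp
  have hPycard : ∀ y, (Py y).card = (P.filter (fun p => p.2 = y)).card := by
    intro y
    rw [hPy]
    apply card_image_of_injOn
    intro p hp p' hp' hpp
    rw [coe_filter, Set.mem_setOf_eq] at hp hp'
    exact Prod.ext hpp (hp.2.trans hp'.2.symm)
  have hsum1 : ∑ y ∈ A, (Sy y).card = (S.filter (fun p => p.1 ∈ A)).card := by
    rw [card_eq_sum_card_fiberwise (f := Prod.fst) (s := S.filter (fun p => p.1 ∈ A)) (t := A)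
      (fun p hp => (mem_filter.1 hp).2)]
    apply Finset.sum_congr rfl
    intro y hy
    rw [hSycard]
    congr 1
    rw [filter_filter]
    ext p
    simp only [mem_filter]
    exact ⟨fun h => ⟨h.1, h.2 ▸ hy, h.2⟩, fun h => ⟨h.1, h.2.2⟩⟩
  have hsum2 : ∑ y ∈ B, (Py y).card = (P.filter (fun p => p.2 ∈ B)).card := by
    rw [card_eq_sum_card_fiberwise (f := Prod.snd) (s := P.filter (fun p => p.2 ∈ B)) (t := B)
      (fun p hp => (mem_filter.1 hp).2)]
    apply Finset.sum_congr rfl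
    intro y hy
    rw [hPycard]
    congr 1
    rw [filter_filter]
    ext p
    simp only [mem_filter]
    exact ⟨fun h => ⟨h.1, h.2 ▸ hy, h.2⟩, fun h => ⟨h.1, h.2.2⟩⟩
  have step4 : (∑ y ∈ A, (Sy y).card) + (∑ y ∈ B, (Py y).card) ≤ a * b := by
    rw [hsum1, hsum2]
    have hdisj : Disjoint (S.filter (fun p => p.1 ∈ A)) (P.filter (fun p => p.2 ∈ B)) :=
      Disjoint.mono (filter_subset _ _) (filter_subset _ _) hdisjPS.symm
    rw [← card_union_of_disjoint hdisj]
    have hsub : (S.filter (fun p => p.1 ∈ A)) ∪ (P.filter (fun p => p.2 ∈ B)) ⊆ A ×ˢ B := by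
      intro p hp
      rcases mem_union.1 hp with hp | hp
      · rw [mem_filter] at hp
        exact mem_product.2 ⟨hp.2, hSB p hp.1⟩
      · rw [mem_filter] at hp
        exact mem_product.2 ⟨hPA p hp.1, hp.2⟩
    calc _ ≤ (A ×ˢ B).card := card_le_card hsub
    _ = a * b := by rw [card_product, ha, hb]
  -- step 5: split sum over univ
  have hsplit : ∑ y : Fin q, (Py y).card * (Sy y).card
      ≤ a * (∑ y ∈ A, (Sy y).card) + (∑ y ∈ B, (Py y).card) * b
        + (q - a - b) * (a * b) := by
    have hABsub : A ∪ B ⊆ (univ : Finset (Fin q)) := subset_univ _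
    rw [← Finset.sum_sdiff hABsub]
    have h1 : ∑ y ∈ A ∪ B, (Py y).card * (Sy y).card
        ≤ a * (∑ y ∈ A, (Sy y).card) + (∑ y ∈ B, (Py y).card) * b := by
      rw [sum_union hdisjAB, mul_sum, sum_mul]
      gcongr with y hy y hy
      · exact card_le_card (hPyA y)
      · exact card_le_card (hSyB y)
    have h2 : ∑ y ∈ univ \ (A ∪ B), (Py y).card * (Sy y).card ≤ (q - a - b) * (a * b) := by
      calc ∑ y ∈ univ \ (A ∪ B), (Py y).card * (Sy y).card
          ≤ ∑ _y ∈ univ \ (A ∪ B), a * b := by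
            gcongr with y hy
            · exact card_le_card (hPyA y)
            · exact card_le_card (hSyB y)
        _ = (univ \ (A ∪ B)).card * (a * b) := by rw [sum_const, smul_eq_mul]
        _ = (q - a - b) * (a * b) := by
            rw [card_sdiff_of_subset hABsub, card_union_of_disjoint hdisjAB]
            simp [ha, hb, Nat.sub_sub]
    calc ∑ y ∈ univ \ (A ∪ B), (Py y).card * (Sy y).card + ∑ y ∈ A ∪ B, (Py y).card * (Sy y).card
        ≤ (q - a - b) * (a * b)
          + (a * (∑ y ∈ A, (Sy y).card) + (∑ y ∈ B, (Py y).card) * b) := Nat.add_le_add h2 h1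
      _ = a * (∑ y ∈ A, (Sy y).card) + (∑ y ∈ B, (Py y).card) * b
          + (q - a - b) * (a * b) := by ring
  -- put everything together
  have htotal : Cf.card ≤ a * (∑ y ∈ A, (Sy y).card) + (∑ y ∈ B, (Py y).card) * b
      + (q - a - b) * (a * b) := by
    rw [step1]
    exact le_trans (Finset.sum_le_sum (fun y _ => step2 y)) hsplit
  have hncard : C.ncard = Cf.card := Set.ncard_eq_toFinset_card C hfin
  rw [hncard]
  exact aux_nat q a b (∑ y ∈ A, (Sy y).card) (∑ y ∈ B, (Py y).card) Cf.card habq step4 htotal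

/-- Theorem 5 of Blackburn, "Non-overlapping codes": `C(3,q) = [2q/3]² (q - [2q/3])`,
where `[x]` is the nearest integer to `x`. -/
theorem stmt16 {q : ℕ} (hq : 2 ≤ q) :
    (maxNOCode 3 q : ℤ)
      = (round ((2 * (q : ℚ)) / 3)) ^ 2 * ((q : ℤ) - round ((2 * (q : ℚ)) / 3)) := by
  classical
  set k : ℕ := (2*q+1)/3 with hk
  have hround : round ((2 * (q:ℚ))/3) = (k : ℤ) := aux_round q
  have hkq : k ≤ q := by omega
  have hk1 : 2*q - 1 ≤ 3*k ∧ 3*k ≤ 2*q + 1 := by omega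
  -- the target value
  set N : ℕ := k^2 * (q - k) with hN
  have hmax : maxNOCode 3 q = N := by
    have hub : ∀ m ∈ {m | ∃ C : Set (Fin 3 → Fin q), NonOverlappingCode C ∧ C.ncard = m},
        m ≤ N := by
      rintro m ⟨C, hC, rfl⟩
      obtain ⟨t, htq, hle⟩ := aux_upper q C hC
      refine le_trans hle ?_
      have := aux_arith q k (q - t) (by exact_mod_cast hq)
        (by omega) (by omega) (by omega)
        (by omega : ((q:ℤ) - t) ≤ q)
      -- convert to ℕ
      have hcast : ((t * (q-t)^2 : ℕ) : ℤ) ≤ ((N : ℕ) : ℤ) := by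
        push_cast [hN, Nat.cast_sub hkq, Nat.cast_sub htq]
        calc ((t:ℤ) * ((q:ℤ) - t)^2) = ((q:ℤ) - t)^2 * ((q:ℤ) - ((q:ℤ) - t)) := by ring
        _ ≤ (k:ℤ)^2 * ((q:ℤ) - k) := this
      exact_mod_cast hcast
    have hmem : N ∈ {m | ∃ C : Set (Fin 3 → Fin q), NonOverlappingCode C ∧ C.ncard = m} := by
      obtain ⟨C, h1, h2⟩ := aux_lower q k hkq
      exact ⟨C, h1, h2⟩
    apply le_antisymm
    · exact csSup_le ⟨N, hmem⟩ hub
    · exact le_csSup ⟨N, hub⟩ hmem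
  rw [hmax, hround, hN]
  push_cast [Nat.cast_sub hkq]
  ring
end
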